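/- Let α ∈ Π_aff^{re,+} be an affine positive real root with α < c. Then the curve neighborhood of the identity at degree α is Γ_α(id) = {s_α}. -/

import Mathlib

open scoped BigOperators

namespace AffA

/-- Elements `⟨w, λ⟩` representing `w · t_λ` in the affine Weyl group
`W_aff = W ⋉ Q∨` of type `A_{n-1}^{(1)}`; the translation part `λ` is recorded
in `ε`-coordinates. -/
@[ext]
structure Aff (n : ℕ) where
  w : Equiv.Perm (Fin n)
  t : Fin n → ℤ

namespace Aff

variable {n : ℕ}

instance : Nonempty (Aff n) := ⟨⟨1, 0⟩⟩

/-- multiplication: `(w t_λ)(v t_μ) = (wv) t_{v⁻¹λ + μ}`. -/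
def mul' (x y : Aff n) : Aff n := ⟨x.w * y.w, fun i => x.t (y.w i) + y.t i⟩

def inv' (x : Aff n) : Aff n := ⟨x.w⁻¹, fun i => - x.t (x.w⁻¹ i)⟩

instance : Group (Aff n) where
  mul := mul'
  one := ⟨1, 0⟩
  inv := inv'
  mul_assoc a b c := by
    show mul' (mul' a b) c = mul' a (mul' b c)
    simp only [mul', Aff.mk.injEq]
    refine ⟨mul_assoc _ _ _, funext fun i => ?_⟩
    simp [Equiv.Perm.mul_apply, add_assoc]
  one_mul a := by
    obtain ⟨aw, av⟩ := a
    show mul' ⟨1, 0⟩ ⟨aw, av⟩ = ⟨aw, av⟩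
    simp only [mul', Aff.mk.injEq]
    exact ⟨one_mul _, funext fun i => by simp⟩
  mul_one a := by
    obtain ⟨aw, av⟩ := a
    show mul' ⟨aw, av⟩ ⟨1, 0⟩ = ⟨aw, av⟩
    simp only [mul', Aff.mk.injEq]
    exact ⟨mul_one _, funext fun i => by simp⟩
  inv_mul_cancel a := by
    obtain ⟨aw, av⟩ := a
    show mul' (inv' ⟨aw, av⟩) ⟨aw, av⟩ = ⟨1, 0⟩
    simp only [mul', inv', Aff.mk.injEq]
    exact ⟨inv_mul_cancel _, funext fun i => by simp⟩

/-- cyclic successor on the vertices `α_0, …, α_{n-1}` of the affine Dynkin diagram. -/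
def fsucc (i : Fin n) : Fin n :=
  ⟨(i.val + 1) % n, Nat.mod_lt _ (Nat.lt_of_le_of_lt (Nat.zero_le _) i.isLt)⟩

/-- the coefficient of `α_0`. -/
def coeff0 (a : Fin n → ℤ) : ℤ := if h : 0 < n then a ⟨0, h⟩ else 0

/-- the `ε`-coordinates of the finite part of an element of the affine root
lattice written in the coordinates of the simple roots `α_0, …, α_{n-1}`
(`δ` is sent to `0`). -/
def finPart (a : Fin n → ℤ) : Fin n → ℤ := fun i => a (fsucc i) - a i

/-- `c = δ = α_0 + α_1 + ⋯ + α_{n-1}`, in simple root coordinates. -/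
def cvec (n : ℕ) : Fin n → ℤ := fun _ => 1

/-- the affine Cartan matrix of type `A_{n-1}^{(1)}` (for `n ≥ 3`). -/
def cartan (i j : Fin n) : ℤ :=
  if i = j then 2 else if j = fsucc i ∨ i = fsucc j then -1 else 0

/-- the natural pairing `⟨a, b∨⟩` of elements of the affine root lattice
(simple root coordinates). -/
def pairing (a b : Fin n → ℤ) : ℤ := ∑ i : Fin n, ∑ j : Fin n, a i * cartan i j * b j

/-- real roots of the affine root system: lattice vectors of norm `2`. -/
def IsRealRoot (a : Fin n → ℤ) : Prop := pairing a a = 2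

/-- affine positive real roots: real roots with nonnegative coordinates. -/
def IsPosRoot (a : Fin n → ℤ) : Prop := IsRealRoot a ∧ ∀ i, 0 ≤ a i

/-- perpendicularity of affine roots. -/
def Perp (a b : Fin n → ℤ) : Prop := pairing a b = 0

/-- the support of an affine root. -/
def supp (a : Fin n → ℤ) : Finset (Fin n) := Finset.univ.filter fun i => a i ≠ 0

/-- the supports of `a` and `b` are disconnected in the affine Dynkin diagram
(a cycle on `α_0, …, α_{n-1}`): no vertex of one is equal or adjacent to a
vertex of the other. -/
def Disconn (a b : Fin n → ℤ) : Prop :=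
  ∀ i j : Fin n, a i ≠ 0 → b j ≠ 0 → i ≠ j ∧ j ≠ fsucc i ∧ i ≠ fsucc j

/-- for roots `a, b < c` (0–1 vectors), `a ∩ b = Σ_{α_i ∈ supp a ∩ supp b} α_i`. -/
def inter (a b : Fin n → ℤ) : Fin n → ℤ :=
  fun i => if a i ≠ 0 ∧ b i ≠ 0 then 1 else 0

instance : Nonempty (Equiv.Perm (Fin n)) := ⟨1⟩

/-- the reflection `s_β = s_α t_{mα}` associated to the real root `β = α + mδ`
(given in simple root coordinates). -/
noncomputable def sref (a : Fin n → ℤ) : Aff n :=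
  ⟨Classical.epsilon fun w : Equiv.Perm (Fin n) => ∃ p q : Fin n,
      finPart a = Pi.single p 1 - Pi.single q 1 ∧ w = Equiv.swap p q,
    fun i => coeff0 a * finPart a i⟩

/-- the simple reflections `s_0, …, s_{n-1}`. -/
noncomputable def simple (i : Fin n) : Aff n := sref (Pi.single i 1)

/-- the Coxeter length, via the Iwahori–Matsumoto formula
`ℓ(w t_λ) = Σ_{γ ∈ Π⁺} |χ(w·γ < 0) + ⟨λ, γ⟩|`. -/
def len (x : Aff n) : ℕ :=
  ∑ p : Fin n, ∑ q : Fin n,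
    if p < q then ((if x.w q < x.w p then (1 : ℤ) else 0) + (x.t p - x.t q)).natAbs else 0

/-- translation `t_v` by an element `v` of the (co)root lattice given in
`ε`-coordinates. -/
def trE (v : Fin n → ℤ) : Aff n := ⟨1, v⟩

/-- a Bruhat step: an edge of the moment graph which increases the length. -/
def bstep (u v : Aff n) : Prop :=
  (∃ a, IsPosRoot a ∧ v = u * sref a) ∧ len u < len v

/-- the Bruhat order: `u ≤ v` iff there is an increasing chain from `u` to `v`
in the moment graph. -/
def ble (u v : Aff n) : Prop := Relation.ReflTransGen bstep u v

/-- there is a chain in the moment graph from `u` to `v` of total degree `≤ d`. -/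
def ChainTo (d : Fin n → ℤ) (u v : Aff n) : Prop :=
  ∃ l : List (Fin n → ℤ),
    (∀ b ∈ l, IsPosRoot b) ∧ l.sum ≤ d ∧ v = u * (l.map sref).prod

/-- the set of elements reachable from some `u' ≤ u` by a chain of degree `≤ d`. -/
def nbhdSet (d : Fin n → ℤ) (u : Aff n) : Set (Aff n) :=
  {v | ∃ u', ble u' u ∧ ChainTo d u' v}

/-- the combinatorial curve neighborhood `Γ_d(u)`: the Bruhat-maximal elements
among those reachable from some `u' ≤ u` by a chain of degree `≤ d`. -/
def curveNbhd (d : Fin n → ℤ) (u : Aff n) : Set (Aff n) :=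
  {v | v ∈ nbhdSet d u ∧ ∀ x ∈ nbhdSet d u, ble v x → x = v}

/-- one step of the Hecke product. -/
noncomputable def heckeStep (u : Aff n) (i : Fin n) : Aff n :=
  if len u < len (u * simple i) then u * simple i else u

/-- the Hecke product `u · v`: multiply `u` on the right, left to right, by the
letters of a reduced word for `v`. -/
noncomputable def heckeMul (u v : Aff n) : Aff n :=
  (Classical.epsilon fun l : List (Fin n) =>
      (l.map simple).prod = v ∧ l.length = len v).foldl heckeStep u

/-- the Hecke product `s_{β_1} · s_{β_2} · ⋯ · s_{β_r}` of the reflections of a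
list of roots. -/
noncomputable def heckeList (l : List (Fin n → ℤ)) : Aff n :=
  l.foldl (fun u b => heckeMul u (sref b)) 1

/-- the defining recursion for `z_d`: `z_0 = id` and `z_d = s_α · z_{d-α}`
(Hecke product), where `α` is any maximal root with `α ≤ d`. -/
inductive IsZ : (Fin n → ℤ) → Aff n → Prop
  | zero : IsZ 0 1
  | step {d a : Fin n → ℤ} {x : Aff n} :
      IsPosRoot a → a ≤ d →
      (∀ b, IsPosRoot b → b ≤ d → a ≤ b → b = a) →
      IsZ (d - a) x → IsZ d (heckeMul (sref a) x)

/-! ### Auxiliary machinery for `curveNbhd_root` -/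

section Aux

lemma mul_w (x y : Aff n) : (x * y).w = x.w * y.w := rfl

lemma mul_t (x y : Aff n) (i : Fin n) : (x * y).t i = x.t (y.w i) + y.t i := rfl

lemma one_w : (1 : Aff n).w = 1 := rfl

lemma one_t (i : Fin n) : (1 : Aff n).t i = 0 := rfl

lemma Equiv.Perm.inv_apply_self {α : Type*} (f : Equiv.Perm α) (x : α) : f⁻¹ (f x) = x :=
  f.symm_apply_apply x

lemma Equiv.Perm.apply_inv_self {α : Type*} (f : Equiv.Perm α) (x : α) : f (f⁻¹ x) = x :=
  f.apply_symm_apply x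

lemma len_one : len (1 : Aff n) = 0 := by
  simp [len, one_w, one_t]
  exact fun a b h => if_neg (not_lt.mpr (le_of_lt h))

lemma ble_len {u v : Aff n} (h : ble u v) : len u ≤ len v := by
  induction h with
  | refl => exact le_refl _
  | tail _ hstep ih => exact ih.trans (le_of_lt hstep.2)

lemma ble_one {u : Aff n} (h : ble u 1) : u = 1 := by
  rcases Relation.ReflTransGen.cases_head h with rfl | ⟨c, hc, hcb⟩
  · rfl
  · have h1 : len c ≤ len (1 : Aff n) := ble_len hcb
    rw [len_one] at h1
    exact absurd (lt_of_lt_of_le hc.2 h1) (Nat.not_lt_zero _)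
    
lemma ble_eq_of_le {u v : Aff n} (h : ble u v) (hl : len v ≤ len u) : u = v := by
  rcases Relation.ReflTransGen.cases_head h with rfl | ⟨c, hc, hcb⟩
  · rfl
  · have h1 := ble_len hcb
    have h2 := hc.2
    omega

/-! #### cyclic predecessor -/

def fpred (i : Fin n) : Fin n :=
  ⟨if i.val = 0 then n - 1 else i.val - 1, by
    have := i.pos; have := i.isLt; split <;> omega⟩

lemma fsucc_val (i : Fin n) : (fsucc i).val = if i.val = n - 1 then 0 else i.val + 1 := by
  have h := i.isLt
  have h0 := i.pos
  show (i.val + 1) % n = _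
  rcases eq_or_ne i.val (n - 1) with he | hne
  · rw [if_pos he, he, Nat.sub_add_cancel (by omega), Nat.mod_self]
  · rw [if_neg hne]
    exact Nat.mod_eq_of_lt (by omega)

lemma fpred_val (i : Fin n) : (fpred i).val = if i.val = 0 then n - 1 else i.val - 1 := rfl

lemma fsucc_fpred (i : Fin n) : fsucc (fpred i) = i := by
  have h := i.isLt; have h0 := i.pos
  apply Fin.ext
  rw [fsucc_val, fpred_val]
  split <;> split <;> omega

lemma fpred_fsucc (i : Fin n) : fpred (fsucc i) = i := by
  have h := i.isLt; have h0 := i.pos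
  apply Fin.ext
  rw [fpred_val, fsucc_val]
  split <;> split <;> omega

lemma fsucc_ne (hn : 3 ≤ n) (i : Fin n) : fsucc i ≠ i := by
  have h := i.isLt
  intro he
  have := congrArg Fin.val he
  rw [fsucc_val] at this
  split at this <;> omega

lemma fpred_ne (hn : 3 ≤ n) (i : Fin n) : fpred i ≠ i := by
  have h := i.isLt
  intro he
  have := congrArg Fin.val he
  rw [fpred_val] at this
  split at this <;> omega

lemma fpred_ne_fsucc (hn : 3 ≤ n) (i : Fin n) : fpred i ≠ fsucc i := by
  have h := i.isLt
  intro he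
  have := congrArg Fin.val he
  rw [fpred_val, fsucc_val] at this
  split at this <;> split at this <;> omega

lemma eq_fsucc_iff (i j : Fin n) : i = fsucc j ↔ j = fpred i := by
  constructor
  · rintro rfl; rw [fpred_fsucc]
  · rintro rfl; rw [fsucc_fpred]

/-! #### pairing -/

lemma row (hn : 3 ≤ n) (b : Fin n → ℤ) (i : Fin n) :
    ∑ j : Fin n, cartan i j * b j = 2 * b i - b (fsucc i) - b (fpred i) := by
  have h1 : fsucc i ≠ i := fsucc_ne hn i
  have h2 : fpred i ≠ i := fpred_ne hn i
  have h3 : fpred i ≠ fsucc i := fpred_ne_fsucc hn i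
  have hsub : ({i, fsucc i, fpred i} : Finset (Fin n)) ⊆ Finset.univ := Finset.subset_univ _
  rw [← Finset.sum_subset hsub (fun j _ hj => ?_)]
  · rw [Finset.sum_insert (by simp [Ne.symm h1, Ne.symm h2]),
      Finset.sum_insert (by simp [Ne.symm h3]), Finset.sum_singleton]
    have e1 : cartan i i = 2 := by simp [cartan]
    have e2 : cartan i (fsucc i) = -1 := by
      unfold cartan
      rw [if_neg (Ne.symm h1), if_pos (Or.inl rfl)]
    have e3 : cartan i (fpred i) = -1 := by
      unfold cartan
      rw [if_neg (Ne.symm h2), if_pos (Or.inr (by rw [fsucc_fpred]))]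
    rw [e1, e2, e3]; ring
  · simp only [Finset.mem_insert, Finset.mem_singleton, not_or] at hj
    obtain ⟨hj1, hj2, hj3⟩ := hj
    have hc : cartan i j = 0 := by
      unfold cartan
      rw [if_neg (fun h => hj1 h.symm), if_neg ?_]
      rintro (h | h)
      · exact hj2 h
      · exact hj3 ((eq_fsucc_iff i j).mp h)
    rw [hc, zero_mul]

lemma pairing_eq (hn : 3 ≤ n) (a b : Fin n → ℤ) :
    pairing a b = ∑ i : Fin n, a i * (2 * b i - b (fsucc i) - b (fpred i)) := by
  unfold pairing
  refine Finset.sum_congr rfl fun i _ => ?_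
  rw [← row hn b i, Finset.mul_sum]
  refine Finset.sum_congr rfl fun j _ => ?_
  ring

def succEquiv (n : ℕ) : Equiv (Fin n) (Fin n) :=
  ⟨fsucc, fpred, fpred_fsucc, fsucc_fpred⟩

lemma sum_fsucc (f : Fin n → ℤ) : ∑ i : Fin n, f (fsucc i) = ∑ i : Fin n, f i :=
  Equiv.sum_comp (succEquiv n) f

lemma sum_fpred (f : Fin n → ℤ) : ∑ i : Fin n, f (fpred i) = ∑ i : Fin n, f i :=
  Equiv.sum_comp (succEquiv n).symm f

lemma finPart_sum (a : Fin n → ℤ) : ∑ i : Fin n, finPart a i = 0 := by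
  unfold finPart
  rw [Finset.sum_sub_distrib, sum_fsucc, sub_self]

lemma pairing_eq_finPart (hn : 3 ≤ n) (a b : Fin n → ℤ) :
    pairing a b = ∑ i : Fin n, finPart a i * finPart b i := by
  rw [pairing_eq hn]
  unfold finPart
  have e2 : ∑ i : Fin n, a (fsucc i) * b (fsucc i) = ∑ i : Fin n, a i * b i :=
    sum_fsucc (fun i => a i * b i)
  have e3 : ∑ i : Fin n, a (fsucc i) * b i = ∑ i : Fin n, a i * b (fpred i) := by
    rw [← sum_fpred (fun i => a (fsucc i) * b i)]
    refine Finset.sum_congr rfl fun i _ => ?_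
    rw [fsucc_fpred]
  have expand : ∀ i : Fin n, (a (fsucc i) - a i) * (b (fsucc i) - b i) =
      a (fsucc i) * b (fsucc i) - a (fsucc i) * b i - a i * b (fsucc i) + a i * b i :=
    fun i => by ring
  have expand2 : ∀ i : Fin n, a i * (2 * b i - b (fsucc i) - b (fpred i)) =
      2 * (a i * b i) - a i * b (fsucc i) - a i * b (fpred i) := fun i => by ring
  calc ∑ i : Fin n, a i * (2 * b i - b (fsucc i) - b (fpred i))
      = ∑ i : Fin n, (2 * (a i * b i) - a i * b (fsucc i) - a i * b (fpred i)) :=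
        Finset.sum_congr rfl fun i _ => expand2 i
    _ = 2 * (∑ i : Fin n, a i * b i) - (∑ i : Fin n, a i * b (fsucc i))
          - (∑ i : Fin n, a i * b (fpred i)) := by
        rw [Finset.sum_sub_distrib, Finset.sum_sub_distrib, Finset.mul_sum]
    _ = ∑ i : Fin n, (a (fsucc i) - a i) * (b (fsucc i) - b i) := by
        rw [Finset.sum_congr rfl fun i (_ : i ∈ Finset.univ) => expand i]
        rw [Finset.sum_add_distrib, Finset.sum_sub_distrib, Finset.sum_sub_distrib, e2, ← e3]
        ring

lemma pairing_comm (hn : 3 ≤ n) (a b : Fin n → ℤ) : pairing a b = pairing b a := by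
  rw [pairing_eq_finPart hn, pairing_eq_finPart hn]
  exact Finset.sum_congr rfl fun i _ => mul_comm _ _

lemma pairing_add_left (a a' b : Fin n → ℤ) :
    pairing (a + a') b = pairing a b + pairing a' b := by
  unfold pairing
  rw [← Finset.sum_add_distrib]
  refine Finset.sum_congr rfl fun i _ => ?_
  rw [← Finset.sum_add_distrib]
  refine Finset.sum_congr rfl fun j _ => ?_
  simp [add_mul]

lemma pairing_add_right (a b b' : Fin n → ℤ) :
    pairing a (b + b') = pairing a b + pairing a b' := by
  unfold pairing
  rw [← Finset.sum_add_distrib]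
  refine Finset.sum_congr rfl fun i _ => ?_
  rw [← Finset.sum_add_distrib]
  refine Finset.sum_congr rfl fun j _ => ?_
  simp [mul_add]

lemma pairing_zero_left (b : Fin n → ℤ) : pairing 0 b = 0 := by
  simp [pairing]

lemma pairing_zero_right (a : Fin n → ℤ) : pairing a 0 = 0 := by
  simp [pairing]

lemma pairing_nonpos (hn : 3 ≤ n) {a b : Fin n → ℤ} (ha : ∀ i, 0 ≤ a i) (hb : ∀ i, 0 ≤ b i)
    (hd : ∀ i, a i = 0 ∨ b i = 0) : pairing a b ≤ 0 := by
  rw [pairing_eq hn]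
  apply Finset.sum_nonpos
  intro i _
  have h0 : a i * b i = 0 := by rcases hd i with h | h <;> simp [h]
  have h1 : 0 ≤ a i * b (fsucc i) := mul_nonneg (ha i) (hb _)
  have h2 : 0 ≤ a i * b (fpred i) := mul_nonneg (ha i) (hb _)
  nlinarith [ha i, hb i]

end Aux

section Aux2

/-! #### 0-1 vectors, classification of small roots -/

def chiv (p q : Fin n) : Fin n → ℤ := fun i => (if i = p then 1 else 0) - (if i = q then 1 else 0)

lemma chiv_eq_single (p q : Fin n) : (Pi.single p 1 - Pi.single q 1 : Fin n → ℤ) = chiv p q := by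
  funext i
  simp [chiv, Pi.single_apply]

lemma sum_mul_chiv (g : Fin n → ℤ) (p q : Fin n) :
    ∑ i : Fin n, g i * chiv p q i = g p - g q := by
  have h : ∀ i, g i * chiv p q i =
      (if i = p then g i else 0) - (if i = q then g i else 0) := fun i => by
    unfold chiv; split_ifs <;> ring
  rw [Finset.sum_congr rfl fun i _ => h i, Finset.sum_sub_distrib]
  simp

lemma fsucc_mk (k : ℕ) (hk : k < n) (hk1 : k + 1 < n) : fsucc ⟨k, hk⟩ = ⟨k + 1, hk1⟩ := by
  apply Fin.ext
  have hv : (⟨k, hk⟩ : Fin n).val = k := rfl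
  rw [fsucc_val, hv, if_neg (by omega : ¬ k = n - 1)]

lemma apply_fsucc (b : Fin n → ℤ) (i : Fin n) : b (fsucc i) = b i + finPart b i := by
  unfold finPart; ring

lemma const_of_finPart_eq_zero {b : Fin n → ℤ} (hb : ∀ i, finPart b i = 0)
    (i j : Fin n) : b i = b j := by
  have h0 : 0 < n := i.pos
  have key : ∀ k : ℕ, ∀ h : k < n, b ⟨k, h⟩ = b ⟨0, h0⟩ := by
    intro k
    induction k with
    | zero => intro h; rfl
    | succ m ih =>
      intro h
      have hm : m < n := by omega
      have hstep : b ⟨m+1, h⟩ = b ⟨m, hm⟩ + finPart b ⟨m, hm⟩ := by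
        rw [← fsucc_mk m hm h]; unfold finPart; ring
      rw [hstep, hb, add_zero, ih hm]
  have hi := key i.val i.isLt
  have hj := key j.val j.isLt
  simp only [Fin.eta] at hi hj
  rw [hi, hj]

lemma two_le_pairing_self (hn : 3 ≤ n) {b : Fin n → ℤ}
    (hb01 : ∀ i, b i = 0 ∨ b i = 1) (hbne : b ≠ 0) (hz : ∃ i, b i = 0) :
    2 ≤ pairing b b := by
  rw [pairing_eq_finPart hn]
  have hfv : ∀ i, finPart b i = -1 ∨ finPart b i = 0 ∨ finPart b i = 1 := fun i => by
    have h1 := hb01 i; have h2 := hb01 (fsucc i)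
    unfold finPart
    omega
  have hsum0 : ∑ i : Fin n, finPart b i = 0 := finPart_sum b
  have hex : ∃ i, finPart b i ≠ 0 := by
    by_contra hc
    push_neg at hc
    obtain ⟨i0, hi0⟩ := hz
    apply hbne
    funext j
    have := const_of_finPart_eq_zero hc j i0
    rw [Pi.zero_apply, this, hi0]
  obtain ⟨i1, hi1⟩ := hex
  have hex2 : ∃ j, j ≠ i1 ∧ finPart b j ≠ 0 := by
    by_contra hc
    push_neg at hc
    have heq : ∑ i : Fin n, finPart b i = finPart b i1 :=
      Finset.sum_eq_single i1 (fun j _ hj => hc j hj) (by simp)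
    rw [hsum0] at heq
    exact hi1 heq.symm
  obtain ⟨j1, hj1ne, hj1⟩ := hex2
  have hsq : ∀ i, finPart b i ≠ 0 → finPart b i * finPart b i = 1 := by
    intro i hi
    rcases hfv i with h | h | h
    · rw [h]; ring
    · exact absurd h hi
    · rw [h]; ring
  calc (2:ℤ) = finPart b i1 * finPart b i1 + finPart b j1 * finPart b j1 := by
        rw [hsq i1 hi1, hsq j1 hj1]; norm_num
    _ = ∑ i ∈ ({i1, j1} : Finset (Fin n)), finPart b i * finPart b i := by
        rw [Finset.sum_insert (by simp [Ne.symm hj1ne]), Finset.sum_singleton]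
    _ ≤ ∑ i : Fin n, finPart b i * finPart b i :=
        Finset.sum_le_sum_of_subset_of_nonneg (Finset.subset_univ _)
          (fun i _ _ => mul_self_nonneg _)

lemma sref_eq {b : Fin n → ℤ} {p q : Fin n} (hpq : p ≠ q) (hf : finPart b = chiv p q) :
    sref b = ⟨Equiv.swap p q, fun i => coeff0 b * chiv p q i⟩ := by
  have hex : ∃ w : Equiv.Perm (Fin n), ∃ p' q' : Fin n,
      finPart b = Pi.single p' 1 - Pi.single q' 1 ∧ w = Equiv.swap p' q' :=
    ⟨Equiv.swap p q, p, q, by rw [hf, chiv_eq_single], rfl⟩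
  obtain ⟨p', q', h1, h2⟩ := Classical.epsilon_spec hex
  unfold sref
  congr 1
  case e_t => rw [hf]
  rw [h2]
  have hE : ∀ i, (if i = p' then (1:ℤ) else 0) - (if i = q' then 1 else 0) = chiv p q i := by
    intro i
    have hc := congrFun h1 i
    rw [hf] at hc
    rw [hc]
    simp [Pi.single_apply]
  have h3 : p = p' ∧ p ≠ q' := by
    have hvp : chiv p q p = 1 := by simp [chiv, hpq]
    have hthis := (hE p).trans hvp
    by_cases ha : p = p'
    · by_cases hb : p = q'
      · rw [if_pos ha, if_pos hb] at hthis; exact absurd hthis (by norm_num)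
      · exact ⟨ha, hb⟩
    · by_cases hb : p = q'
      · rw [if_neg ha, if_pos hb] at hthis; exact absurd hthis (by norm_num)
      · rw [if_neg ha, if_neg hb] at hthis; exact absurd hthis (by norm_num)
  have h4 : q = q' ∧ q ≠ p' := by
    have hvq : chiv p q q = -1 := by simp [chiv, Ne.symm hpq]
    have hthis := (hE q).trans hvq
    by_cases ha : q = p'
    · by_cases hb : q = q'
      · rw [if_pos ha, if_pos hb] at hthis; exact absurd hthis (by norm_num)
      · rw [if_pos ha, if_neg hb] at hthis; exact absurd hthis (by norm_num)
    · by_cases hb : q = q'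
      · exact ⟨hb, ha⟩
      · rw [if_neg ha, if_neg hb] at hthis; exact absurd hthis (by norm_num)
  rw [← h3.1, ← h4.1]

lemma gvals {γ : Fin n → ℤ} {p q : Fin n} (hf : finPart γ = chiv p q) (h0 : 0 < n) :
    ∀ (j : ℕ) (hj : j < n), γ ⟨j, hj⟩ = γ ⟨0, h0⟩
      + (if p.val < j then 1 else 0) - (if q.val < j then 1 else 0) := by
  intro j
  induction j with
  | zero => intro hj; simp
  | succ k ih =>
    intro hj
    have hk : k < n := by omega
    have hstep : γ ⟨k+1, hj⟩ = γ ⟨k, hk⟩ + finPart γ ⟨k, hk⟩ := by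
      rw [← fsucc_mk k hk hj]; unfold finPart; ring
    rw [hstep, ih hk, hf]
    have hp : ((⟨k, hk⟩ : Fin n) = p) ↔ k = p.val := by rw [Fin.ext_iff]
    have hq : ((⟨k, hk⟩ : Fin n) = q) ↔ k = q.val := by rw [Fin.ext_iff]
    unfold chiv
    simp only [hp, hq]
    split_ifs <;> omega

lemma coeff0_eq (h0 : 0 < n) (γ : Fin n → ℤ) : coeff0 γ = γ ⟨0, h0⟩ := by
  simp [coeff0, h0]

lemma ord {γ : Fin n → ℤ} {p q : Fin n} (hn : 3 ≤ n) (hf : finPart γ = chiv p q)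
    (hnn : ∀ i, 0 ≤ γ i) (hpq : p ≠ q) :
    1 ≤ coeff0 γ ∨ (coeff0 γ = 0 ∧ p < q) := by
  have h0 : 0 < n := by omega
  have hc0 : coeff0 γ = γ ⟨0, h0⟩ := coeff0_eq h0 γ
  rcases le_or_gt 1 (coeff0 γ) with h | h
  · exact Or.inl h
  · have hge : 0 ≤ coeff0 γ := hc0 ▸ hnn _
    have hz : coeff0 γ = 0 := by omega
    refine Or.inr ⟨hz, ?_⟩
    by_contra hcon
    have hqp : q < p := lt_of_le_of_ne (not_lt.mp hcon) hpq.symm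
    have hqpv : q.val < p.val := hqp
    have hqn : q.val + 1 < n := by have := p.isLt; omega
    have hval := gvals hf h0 (q.val + 1) hqn
    rw [if_neg (by omega), if_pos (by omega)] at hval
    have h1 := hnn ⟨q.val + 1, hqn⟩
    rw [hc0] at hz
    omega

lemma pairing_adj (hn : 3 ≤ n) {x ξ : Fin n → ℤ} {p q : Fin n}
    (hf : finPart x = chiv p q) (hxp : x (fsucc p) = 1) (hxq : x q = 1)
    (hd : ∀ i, x i = 0 ∨ ξ i = 0) : pairing x ξ = -(ξ p + ξ (fsucc q)) := by
  rw [pairing_eq_finPart hn, hf]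
  have h : ∀ i, chiv p q i * finPart ξ i =
      (if i = p then finPart ξ i else 0) - (if i = q then finPart ξ i else 0) := fun i => by
    unfold chiv; split_ifs <;> ring
  rw [Finset.sum_congr rfl fun i _ => h i, Finset.sum_sub_distrib]
  simp only [Finset.sum_ite_eq', Finset.mem_univ, if_true]
  have h1 : ξ (fsucc p) = 0 := by
    rcases hd (fsucc p) with h' | h'
    · rw [hxp] at h'; omega
    · exact h'
  have h2 : ξ q = 0 := by
    rcases hd q with h' | h'
    · rw [hxq] at h'; omega
    · exact h'
  unfold finPart
  rw [h1, h2]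
  ring

lemma exists_data (hn : 3 ≤ n) {b : Fin n → ℤ} (hb : IsPosRoot b) (hb1 : ∀ i, b i ≤ 1) :
    ∃ p q : Fin n, p ≠ q ∧ finPart b = chiv p q ∧ b (fsucc p) = 1 ∧ b q = 1 ∧ b p = 0 ∧
      b (fsucc q) = 0 ∧ ((coeff0 b = 0 ∧ p < q) ∨ (coeff0 b = 1 ∧ q < p)) ∧
      sref b = ⟨Equiv.swap p q, fun i => coeff0 b * chiv p q i⟩ := by
  have h0 : 0 < n := by omega
  have h01 : ∀ i, b i = 0 ∨ b i = 1 := fun i => by have := hb.2 i; have := hb1 i; omega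
  have hfv : ∀ i, finPart b i = -1 ∨ finPart b i = 0 ∨ finPart b i = 1 := fun i => by
    have h1 := h01 i; have h2 := h01 (fsucc i)
    unfold finPart
    omega
  have hsum0 : ∑ i : Fin n, finPart b i = 0 := finPart_sum b
  have hsq : ∑ i : Fin n, finPart b i * finPart b i = 2 := by
    rw [← pairing_eq_finPart hn]; exact hb.1
  have hexp : ∃ p, finPart b p = 1 := by
    by_contra hc
    push_neg at hc
    have hle : ∀ i ∈ Finset.univ, finPart b i ≤ 0 := fun i _ => by
      rcases hfv i with h | h | h
      · omega
      · omega
      · exact absurd h (hc i)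
    have hall := (Finset.sum_eq_zero_iff_of_nonpos hle).mp hsum0
    have : ∑ i : Fin n, finPart b i * finPart b i = 0 :=
      Finset.sum_eq_zero fun i hi => by rw [hall i hi]; ring
    rw [this] at hsq
    omega
  obtain ⟨p, hp⟩ := hexp
  have hexq : ∃ q, finPart b q = -1 := by
    by_contra hc
    push_neg at hc
    have hle : ∀ i ∈ Finset.univ, 0 ≤ finPart b i := fun i _ => by
      rcases hfv i with h | h | h
      · exact absurd h (hc i)
      · omega
      · omega
    have hall := (Finset.sum_eq_zero_iff_of_nonneg hle).mp hsum0
    have : ∑ i : Fin n, finPart b i * finPart b i = 0 :=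
      Finset.sum_eq_zero fun i hi => by rw [hall i hi]; ring
    rw [this] at hsq
    omega
  obtain ⟨q, hq⟩ := hexq
  have hpq : p ≠ q := fun h => by rw [h, hq] at hp; omega
  have hrest : ∀ i, i ≠ p → i ≠ q → finPart b i = 0 := by
    intro i hip hiq
    have hsubset : ({p, q} : Finset (Fin n)) ⊆ Finset.univ := Finset.subset_univ _
    have hsdiff := Finset.sum_sdiff (f := fun j => finPart b j * finPart b j) hsubset
    rw [hsq] at hsdiff
    have hpair : ∑ j ∈ ({p, q} : Finset (Fin n)), finPart b j * finPart b j = 2 := by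
      rw [Finset.sum_insert (by simp [hpq]), Finset.sum_singleton, hp, hq]
      ring
    rw [hpair] at hsdiff
    have hzero : ∑ j ∈ Finset.univ \ ({p, q} : Finset (Fin n)), finPart b j * finPart b j = 0 := by
      linarith
    have hmem : i ∈ Finset.univ \ ({p, q} : Finset (Fin n)) := by simp [hip, hiq]
    have := (Finset.sum_eq_zero_iff_of_nonneg
      (fun j _ => mul_self_nonneg (finPart b j))).mp hzero i hmem
    exact mul_self_eq_zero.mp this
  have hfchi : finPart b = chiv p q := by
    funext i
    unfold chiv
    by_cases h1 : i = p
    · subst h1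
      rw [if_pos rfl, if_neg hpq, hp]
      norm_num
    · by_cases h2 : i = q
      · subst h2
        rw [if_neg h1, if_pos rfl, hq]
        ring
      · rw [if_neg h1, if_neg h2, hrest i h1 h2]
        ring
  have hbsp : b (fsucc p) = 1 ∧ b p = 0 := by
    have := h01 p; have := h01 (fsucc p)
    have : b (fsucc p) - b p = 1 := hp
    constructor <;> omega
  have hbq : b q = 1 ∧ b (fsucc q) = 0 := by
    have := h01 q; have := h01 (fsucc q)
    have : b (fsucc q) - b q = -1 := hq
    constructor <;> omega
  have hc0 : coeff0 b = b ⟨0, h0⟩ := coeff0_eq h0 b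
  have hm01 : coeff0 b = 0 ∨ coeff0 b = 1 := by rw [hc0]; exact h01 _
  have horder : (coeff0 b = 0 ∧ p < q) ∨ (coeff0 b = 1 ∧ q < p) := by
    rcases hm01 with hm | hm
    · refine Or.inl ⟨hm, ?_⟩
      rcases lt_trichotomy p q with h | h | h
      · exact h
      · exact absurd h hpq
      · exfalso
        have hqpv : q.val < p.val := h
        have hqn : q.val + 1 < n := by have := p.isLt; omega
        have hval := gvals hfchi h0 (q.val + 1) hqn
        rw [if_neg (by omega), if_pos (by omega)] at hval
        have h1 := hb.2 ⟨q.val + 1, hqn⟩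
        rw [hc0] at hm
        omega
    · refine Or.inr ⟨hm, ?_⟩
      rcases lt_trichotomy q p with h | h | h
      · exact h
      · exact absurd h.symm hpq
      · exfalso
        have hpqv : p.val < q.val := h
        have hpn : p.val + 1 < n := by have := q.isLt; omega
        have hval := gvals hfchi h0 (p.val + 1) hpn
        rw [if_pos (by omega), if_neg (by omega)] at hval
        have h1 := hb1 ⟨p.val + 1, hpn⟩
        rw [hc0] at hm
        omega
  exact ⟨p, q, hpq, hfchi, hbsp.1, hbq.1, hbsp.2, hbq.2, horder, sref_eq hpq hfchi⟩

end Aux2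

section Aux3

/-! #### the action of `Aff n` on the affine root lattice -/

def rec0 (ξ : Fin n → ℤ) (m : ℤ) : Fin n → ℤ :=
  fun i => m + ∑ k ∈ Finset.range i.val, ξ ⟨k % n, Nat.mod_lt k i.pos⟩

lemma rec0_zero (ξ : Fin n → ℤ) (m : ℤ) (h0 : 0 < n) : rec0 ξ m ⟨0, h0⟩ = m := by
  simp [rec0]

lemma rec0_succ (ξ : Fin n → ℤ) (m : ℤ) (k : ℕ) (hk : k < n) (hk1 : k + 1 < n) :
    rec0 ξ m ⟨k + 1, hk1⟩ = rec0 ξ m ⟨k, hk⟩ + ξ ⟨k, hk⟩ := by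
  unfold rec0
  rw [show ((⟨k+1, hk1⟩ : Fin n)).val = k + 1 from rfl, Finset.sum_range_succ]
  have he : (⟨k % n, Nat.mod_lt k (Fin.pos ⟨k+1, hk1⟩)⟩ : Fin n) = ⟨k, hk⟩ :=
    Fin.ext (Nat.mod_eq_of_lt hk)
  rw [he]
  ring_nf

lemma rec0_finPart_coeff0 (h0 : 0 < n) (a : Fin n → ℤ) :
    rec0 (finPart a) (a ⟨0, h0⟩) = a := by
  have key : ∀ (j : ℕ) (hj : j < n), rec0 (finPart a) (a ⟨0, h0⟩) ⟨j, hj⟩ = a ⟨j, hj⟩ := by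
    intro j
    induction j with
    | zero => intro hj; exact rec0_zero _ _ _
    | succ k ih =>
      intro hj
      have hk : k < n := by omega
      rw [rec0_succ _ _ k hk hj, ih hk]
      rw [show a ⟨k+1, hj⟩ = a (fsucc ⟨k, hk⟩) from by rw [fsucc_mk k hk hj]]
      unfold finPart
      ring
  funext i
  have := key i.val i.isLt
  simpa [Fin.eta] using this

lemma sum_range_eq_sum_univ (h0 : 0 < n) (ξ : Fin n → ℤ) :
    ∑ k ∈ Finset.range n, ξ ⟨k % n, Nat.mod_lt k h0⟩ = ∑ i : Fin n, ξ i := by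
  rw [← Fin.sum_univ_eq_sum_range (fun k => ξ ⟨k % n, Nat.mod_lt k h0⟩) n]
  refine Finset.sum_congr rfl fun i _ => ?_
  congr 1
  exact Fin.ext (Nat.mod_eq_of_lt i.isLt)

lemma finPart_rec0 (h0 : 0 < n) {ξ : Fin n → ℤ} (hs : ∑ i : Fin n, ξ i = 0) (m : ℤ) :
    finPart (rec0 ξ m) = ξ := by
  funext i
  show rec0 ξ m (fsucc i) - rec0 ξ m i = ξ i
  rcases eq_or_ne i.val (n - 1) with he | hne
  · have hfs : fsucc i = ⟨0, h0⟩ := Fin.ext (by rw [fsucc_val, if_pos he])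
    rw [hfs, rec0_zero _ _ h0]
    have hrange : Finset.range i.val = Finset.range (n - 1) := by rw [he]
    have hrec : rec0 ξ m i = m + ∑ k ∈ Finset.range (n - 1),
        ξ ⟨k % n, Nat.mod_lt k h0⟩ := by
      show m + ∑ k ∈ Finset.range i.val, ξ ⟨k % n, Nat.mod_lt k i.pos⟩ = _
      rw [hrange]
    have hsplit := Finset.sum_range_succ (fun k => ξ ⟨k % n, Nat.mod_lt k h0⟩) (n - 1)
    rw [show n - 1 + 1 = n from by omega, sum_range_eq_sum_univ h0 ξ, hs] at hsplit
    have hlast : ξ ⟨(n - 1) % n, Nat.mod_lt (n - 1) h0⟩ = ξ i := by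
      congr 1
      apply Fin.ext
      show (n - 1) % n = i.val
      rw [Nat.mod_eq_of_lt (by omega), he]
    rw [hrec, ← hlast]
    linarith
  · have hlt : i.val + 1 < n := by have := i.isLt; omega
    have hfs : fsucc i = ⟨i.val + 1, hlt⟩ := Fin.ext (by rw [fsucc_val, if_neg hne])
    rw [hfs, rec0_succ ξ m i.val i.isLt hlt]
    have heta : (⟨i.val, i.isLt⟩ : Fin n) = i := Fin.ext rfl
    rw [heta]
    ring

def actv (x : Aff n) (a : Fin n → ℤ) : Fin n → ℤ :=
  rec0 (fun j => finPart a (x.w⁻¹ j)) (coeff0 a - ∑ i : Fin n, x.t i * finPart a i)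

lemma sum_comp_perm (σ : Equiv.Perm (Fin n)) (f : Fin n → ℤ) :
    ∑ i : Fin n, f (σ i) = ∑ i : Fin n, f i := Equiv.sum_comp σ f

lemma finPart_actv (hn3 : 3 ≤ n) (x : Aff n) (a : Fin n → ℤ) :
    finPart (actv x a) = fun j => finPart a (x.w⁻¹ j) := by
  apply finPart_rec0 (by omega)
  rw [sum_comp_perm x.w⁻¹ (finPart a)]
  exact finPart_sum a

lemma coeff0_actv (hn3 : 3 ≤ n) (x : Aff n) (a : Fin n → ℤ) :
    coeff0 (actv x a) = coeff0 a - ∑ i : Fin n, x.t i * finPart a i := by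
  have h0 : 0 < n := by omega
  rw [show actv x a = rec0 (fun j => finPart a (x.w⁻¹ j))
      (coeff0 a - ∑ i : Fin n, x.t i * finPart a i) from rfl]
  rw [coeff0_eq h0, rec0_zero]

lemma actv_one (hn3 : 3 ≤ n) (a : Fin n → ℤ) : actv 1 a = a := by
  have h0 : 0 < n := by omega
  unfold actv
  have h1 : (fun j => finPart a ((1 : Aff n).w⁻¹ j)) = finPart a := by
    funext j
    rw [one_w]
    simp
  have h2 : coeff0 a - ∑ i : Fin n, (1 : Aff n).t i * finPart a i = a ⟨0, h0⟩ := by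
    simp [one_t, coeff0_eq h0]
  rw [h1, h2, rec0_finPart_coeff0 h0]

lemma actv_mul (hn3 : 3 ≤ n) (x y : Aff n) (a : Fin n → ℤ) :
    actv (x * y) a = actv x (actv y a) := by
  have h1 : finPart (actv y a) = fun j => finPart a (y.w⁻¹ j) := finPart_actv hn3 y a
  have h2 : coeff0 (actv y a) = coeff0 a - ∑ i : Fin n, y.t i * finPart a i :=
    coeff0_actv hn3 y a
  have hargξ : (fun j => finPart a ((x * y).w⁻¹ j))
      = (fun j => finPart (actv y a) (x.w⁻¹ j)) := by
    funext j
    rw [congrFun h1 (x.w⁻¹ j), mul_w, mul_inv_rev, Equiv.Perm.mul_apply]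
  have hargm : coeff0 a - ∑ i : Fin n, (x * y).t i * finPart a i
      = coeff0 (actv y a) - ∑ i : Fin n, x.t i * finPart (actv y a) i := by
    rw [h2]
    have e0 : ∑ i : Fin n, x.t i * finPart (actv y a) i
        = ∑ i : Fin n, x.t i * finPart a (y.w⁻¹ i) :=
      Finset.sum_congr rfl fun i _ => by rw [congrFun h1 i]
    have e : ∑ i : Fin n, x.t i * finPart a (y.w⁻¹ i)
        = ∑ i : Fin n, x.t (y.w i) * finPart a i := by
      rw [← sum_comp_perm y.w (fun i => x.t i * finPart a (y.w⁻¹ i))]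
      refine Finset.sum_congr rfl fun i _ => ?_
      rw [Equiv.Perm.inv_apply_self]
    have e2 : ∑ i : Fin n, (x * y).t i * finPart a i
        = ∑ i : Fin n, (x.t (y.w i) * finPart a i + y.t i * finPart a i) := by
      refine Finset.sum_congr rfl fun i _ => ?_
      rw [mul_t]
      ring
    rw [e0, e, e2, Finset.sum_add_distrib]
    ring
  calc actv (x * y) a
      = rec0 (fun j => finPart a ((x * y).w⁻¹ j))
        (coeff0 a - ∑ i : Fin n, (x * y).t i * finPart a i) := rfl
    _ = rec0 (fun j => finPart (actv y a) (x.w⁻¹ j))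
        (coeff0 (actv y a) - ∑ i : Fin n, x.t i * finPart (actv y a) i) := by
        rw [hargξ, hargm]
    _ = actv x (actv y a) := rfl

lemma actv_sref (hn3 : 3 ≤ n) {b : Fin n → ℤ} {p q : Fin n} (hpq : p ≠ q)
    (hf : finPart b = chiv p q) (a : Fin n → ℤ) :
    actv (sref b) a = fun i => a i - pairing a b * b i := by
  have h0 : 0 < n := by omega
  rw [sref_eq hpq hf]
  set c := pairing a b with hc
  have hcval : c = finPart a p - finPart a q := by
    rw [hc, pairing_eq_finPart hn3, hf, sum_mul_chiv]
  set g : Fin n → ℤ := fun i => a i - c * b i with hg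
  have hfg : finPart g = fun j => finPart a (Equiv.swap p q j) := by
    funext j
    have e1 : finPart g j = finPart a j - c * finPart b j := by
      show g (fsucc j) - g j = _
      rw [hg]
      unfold finPart
      ring
    rw [e1, hf]
    unfold chiv
    by_cases h1 : j = p
    · subst h1; rw [Equiv.swap_apply_left, if_pos rfl, if_neg hpq, hcval]; ring
    · by_cases h2 : j = q
      · subst h2; rw [Equiv.swap_apply_right, if_neg h1, if_pos rfl, hcval]; ring
      · rw [Equiv.swap_apply_of_ne_of_ne h1 h2, if_neg h1, if_neg h2]; ring
  have hg0 : g ⟨0, h0⟩ = coeff0 a - c * coeff0 b := by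
    rw [hg]
    show a ⟨0,h0⟩ - c * b ⟨0,h0⟩ = _
    rw [coeff0_eq h0 a, coeff0_eq h0 b]
  have hw2 : (fun j => finPart a ((Aff.mk (Equiv.swap p q)
      (fun i => coeff0 b * chiv p q i)).w⁻¹ j)) = fun j => finPart a (Equiv.swap p q j) := by
    funext j
    rw [show (Aff.mk (Equiv.swap p q) (fun i => coeff0 b * chiv p q i)).w = Equiv.swap p q
      from rfl, Equiv.swap_inv]
  have hm : coeff0 a - ∑ i : Fin n, (Aff.mk (Equiv.swap p q)
      (fun i => coeff0 b * chiv p q i)).t i * finPart a i = coeff0 a - c * coeff0 b := by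
    rw [show (Aff.mk (Equiv.swap p q) (fun i => coeff0 b * chiv p q i)).t
      = fun i => coeff0 b * chiv p q i from rfl]
    have e : ∑ i : Fin n, (coeff0 b * chiv p q i) * finPart a i
        = coeff0 b * (finPart a p - finPart a q) := by
      rw [Finset.sum_congr rfl fun i _ =>
        (by ring : (coeff0 b * chiv p q i) * finPart a i = coeff0 b * (finPart a i * chiv p q i)),
        ← Finset.mul_sum, sum_mul_chiv]
    rw [e, hcval]
    ring
  rw [show actv (Aff.mk (Equiv.swap p q) (fun i => coeff0 b * chiv p q i)) a
      = rec0 (fun j => finPart a ((Aff.mk (Equiv.swap p q)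
        (fun i => coeff0 b * chiv p q i)).w⁻¹ j))
        (coeff0 a - ∑ i : Fin n, (Aff.mk (Equiv.swap p q)
        (fun i => coeff0 b * chiv p q i)).t i * finPart a i) from rfl,
    hw2, hm, ← hg0, ← hfg, rec0_finPart_coeff0 h0]

lemma actv_sref_pt (hn3 : 3 ≤ n) {b : Fin n → ℤ} (hb : IsPosRoot b) (hb1 : ∀ i, b i ≤ 1)
    (a : Fin n → ℤ) : actv (sref b) a = fun i => a i - pairing a b * b i := by
  obtain ⟨p, q, hpq, hf, -, -, -, -, -, -⟩ := exists_data hn3 hb hb1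
  exact actv_sref hn3 hpq hf a

lemma list_sum_apply (L : List (Fin n → ℤ)) (i : Fin n) :
    L.sum i = (L.map (fun b => b i)).sum := by
  induction L with
  | nil => rfl
  | cons b L ih => simp [List.sum_cons, ih]

lemma list_sum_nonneg {L : List (Fin n → ℤ)} (h : ∀ b ∈ L, ∀ i, 0 ≤ b i) (i : Fin n) :
    0 ≤ L.sum i := by
  induction L with
  | nil => simp [list_sum_apply]
  | cons b L ih =>
    have h1 := h b (List.mem_cons_self)
    have h2 := ih (fun b' hb' => h b' (List.mem_cons_of_mem _ hb'))
    rw [list_sum_apply] at h2 ⊢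
    simp only [List.map_cons, List.sum_cons]
    have := h1 i
    linarith

lemma member_le_sum {L : List (Fin n → ℤ)} (h : ∀ b ∈ L, ∀ i, 0 ≤ b i)
    {b : Fin n → ℤ} (hb : b ∈ L) (i : Fin n) : b i ≤ L.sum i := by
  induction L with
  | nil => exact absurd hb (List.not_mem_nil)
  | cons c L ih =>
    rw [list_sum_apply]
    simp only [List.map_cons, List.sum_cons]
    rcases List.mem_cons.mp hb with rfl | hb'
    · have := list_sum_nonneg (fun b' hb' => h b' (List.mem_cons_of_mem _ hb')) i
      rw [list_sum_apply] at this
      linarith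
    · have h1 := (h c (List.mem_cons_self)) i
      have h2 := ih (fun b' hb'' => h b' (List.mem_cons_of_mem _ hb'')) hb'
      rw [list_sum_apply] at h2
      linarith

lemma actv_prod_nonneg (hn3 : 3 ≤ n) :
    ∀ (L : List (Fin n → ℤ)) (γ : Fin n → ℤ),
    (∀ b ∈ L, IsPosRoot b ∧ ∀ i, b i ≤ 1) →
    List.Pairwise (fun b b' => ∀ i, b i = 0 ∨ b' i = 0) L →
    (∀ b ∈ L, ∀ i, γ i = 0 ∨ b i = 0) →
    (∀ i, 0 ≤ γ i) →
    ∃ z : Fin n → ℤ, actv ((L.map sref).prod) γ = γ + z ∧ (∀ i, 0 ≤ z i) ∧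
      (∀ i, L.sum i = 0 → z i = 0) := by
  intro L
  induction L with
  | nil =>
    intro γ _ _ _ _
    refine ⟨0, ?_, by simp, by simp⟩
    simp only [List.map_nil, List.prod_nil, add_zero]
    exact actv_one hn3 γ
  | cons b L ih =>
    intro γ hroots hpw hdγ hγ
    obtain ⟨z', hz'1, hz'2, hz'3⟩ := ih γ (fun b' hb' => hroots b' (List.mem_cons_of_mem _ hb'))
      hpw.of_cons (fun b' hb' => hdγ b' (List.mem_cons_of_mem _ hb')) hγ
    have hb := hroots b (List.mem_cons_self)
    have hKγ : pairing γ b ≤ 0 :=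
      pairing_nonpos hn3 hγ hb.1.2 (hdγ b (List.mem_cons_self))
    have hsupz : ∀ i, b i ≠ 0 → z' i = 0 := by
      intro i hbi
      apply hz'3
      rw [list_sum_apply]
      apply List.sum_eq_zero
      intro v hv
      simp only [List.mem_map] at hv
      obtain ⟨b', hb', rfl⟩ := hv
      rcases (List.pairwise_cons.mp hpw).1 b' hb' i with h | h
      · exact absurd h hbi
      · exact h
    have hKz : pairing z' b ≤ 0 := by
      refine pairing_nonpos hn3 hz'2 hb.1.2 (fun i => ?_)
      by_cases h : b i = 0
      · exact Or.inr h
      · exact Or.inl (hsupz i h)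
    have hprod : (List.map sref (b :: L)).prod = sref b * (List.map sref L).prod := by simp
    rw [hprod, actv_mul hn3, hz'1, actv_sref_pt hn3 hb.1 hb.2]
    set K := pairing (γ + z') b with hK
    have hK0 : K ≤ 0 := by
      rw [hK, pairing_add_left]
      linarith
    refine ⟨fun i => z' i + (-K) * b i, ?_, ?_, ?_⟩
    · funext i
      show (γ + z') i - K * b i = γ i + (z' i + (-K) * b i)
      simp only [Pi.add_apply]
      ring
    · intro i
      show 0 ≤ z' i + (-K) * b i
      have h1 := hb.1.2 i
      have h2 := hz'2 i
      have h3 : 0 ≤ (-K) * b i := mul_nonneg (by linarith) h1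
      linarith
    · intro i hzero
      show z' i + (-K) * b i = 0
      have hsc : b i + L.sum i = 0 := by
        have : (b :: L).sum i = b i + L.sum i := by
          rw [list_sum_apply, List.map_cons, List.sum_cons, list_sum_apply]
        rw [← this, hzero]
      have hbn : 0 ≤ b i := hb.1.2 i
      have hLn : 0 ≤ L.sum i := list_sum_nonneg
        (fun b' hb' => (hroots b' (List.mem_cons_of_mem _ hb')).1.2) i
      have hb0 : b i = 0 := by omega
      have hz0 : z' i = 0 := hz'3 i (by omega)
      rw [hb0, hz0]
      ring

lemma actv_prod_fix (hn3 : 3 ≤ n) :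
    ∀ (L : List (Fin n → ℤ)) (γ : Fin n → ℤ),
    (∀ b ∈ L, IsPosRoot b ∧ (∀ i, b i ≤ 1) ∧ pairing γ b = 0) →
    actv ((L.map sref).prod) γ = γ := by
  intro L
  induction L with
  | nil =>
    intro γ _
    simp only [List.map_nil, List.prod_nil]
    exact actv_one hn3 γ
  | cons b L ih =>
    intro γ h
    have hb := h b (List.mem_cons_self)
    rw [show (List.map sref (b :: L)).prod = sref b * (List.map sref L).prod from by simp,
        actv_mul hn3, ih γ (fun b' hb' => h b' (List.mem_cons_of_mem _ hb')),
        actv_sref_pt hn3 hb.1 hb.2.1]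
    funext i
    rw [hb.2.2]
    ring

end Aux3

section Aux4

/-! #### the Iwahori–Matsumoto length increases along positive reflections -/

def Cf (x : Aff n) (u v : Fin n) : ℤ := (if x.w v < x.w u then (1:ℤ) else 0) + x.t u - x.t v

lemma lenZ (x : Aff n) : (len x : ℤ) = ∑ u : Fin n, ∑ v : Fin n,
    (if u < v then |Cf x u v| else 0) := by
  unfold len Cf
  rw [Nat.cast_sum]
  refine Finset.sum_congr rfl fun u _ => ?_
  rw [Nat.cast_sum]
  refine Finset.sum_congr rfl fun v _ => ?_
  by_cases h : u < v
  · rw [if_pos h, if_pos h, Int.natCast_natAbs]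
    congr 1
    ring
  · rw [if_neg h, if_neg h, Nat.cast_zero]

lemma Cf_compl (x : Aff n) {u v : Fin n} (h : u ≠ v) : Cf x v u = 1 - Cf x u v := by
  unfold Cf
  have hne : x.w u ≠ x.w v := fun he => h (x.w.injective he)
  rcases lt_or_gt_of_ne hne with h1 | h1
  · rw [if_neg (lt_asymm h1), if_pos h1]
    ring
  · rw [if_pos h1, if_neg (lt_asymm h1)]
    ring

lemma chiv_left (p q : Fin n) (hpq : p ≠ q) : chiv p q p = 1 := by simp [chiv, hpq]

lemma chiv_right (p q : Fin n) (hpq : p ≠ q) : chiv p q q = -1 := by simp [chiv, Ne.symm hpq]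

lemma chiv_other (p q a : Fin n) (h1 : a ≠ p) (h2 : a ≠ q) : chiv p q a = 0 := by
  simp [chiv, h1, h2]

lemma sum_univ_split (p q : Fin n) (hpq : p ≠ q) (f : Fin n → ℤ) :
    ∑ v : Fin n, f v = f p + f q
      + ∑ v ∈ Finset.univ.filter (fun v => v ≠ p ∧ v ≠ q), f v := by
  classical
  have h1 := Finset.sum_filter_add_sum_filter_not Finset.univ (fun v : Fin n => v = p ∨ v = q) f
  have h2 : Finset.univ.filter (fun v : Fin n => v = p ∨ v = q) = {p, q} := by
    ext v
    simp
  have h3 : Finset.univ.filter (fun v : Fin n => ¬(v = p ∨ v = q))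
      = Finset.univ.filter (fun v : Fin n => v ≠ p ∧ v ≠ q) := by
    apply Finset.filter_congr
    intro v _
    simp [not_or]
  rw [h2, h3] at h1
  rw [← h1, Finset.sum_insert (by simp [hpq]), Finset.sum_singleton]
  try ring

lemma sum_split (p q : Fin n) (hpq : p ≠ q) (g : Fin n → Fin n → ℤ)
    (h0 : ∀ u v, u ≠ p → u ≠ q → v ≠ p → v ≠ q → g u v = 0) (hdiag : ∀ u, g u u = 0) :
    ∑ u : Fin n, ∑ v : Fin n, g u v
      = g p q + g q p + ∑ a ∈ Finset.univ.filter (fun a => a ≠ p ∧ a ≠ q),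
          (g a p + g a q + g p a + g q a) := by
  classical
  have e1 : ∑ u : Fin n, ∑ v : Fin n, g u v
      = ∑ u : Fin n, (g u p + g u q + ∑ v ∈ Finset.univ.filter
          (fun v => v ≠ p ∧ v ≠ q), g u v) :=
    Finset.sum_congr rfl fun u _ => sum_univ_split p q hpq (g u)
  have e2 : ∑ u : Fin n, (g u p + g u q + ∑ v ∈ Finset.univ.filter
        (fun v => v ≠ p ∧ v ≠ q), g u v)
      = (∑ u : Fin n, (g u p + g u q)) + ∑ u : Fin n, ∑ v ∈ Finset.univ.filter
          (fun v => v ≠ p ∧ v ≠ q), g u v := Finset.sum_add_distrib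
  have e3 : ∑ u : Fin n, (g u p + g u q)
      = (g p p + g p q) + (g q p + g q q) + ∑ a ∈ Finset.univ.filter
          (fun a => a ≠ p ∧ a ≠ q), (g a p + g a q) := by
    have := sum_univ_split p q hpq (fun u => g u p + g u q)
    linarith [this]
  have e4 : ∑ u : Fin n, ∑ v ∈ Finset.univ.filter (fun v => v ≠ p ∧ v ≠ q), g u v
      = (∑ v ∈ Finset.univ.filter (fun v : Fin n => v ≠ p ∧ v ≠ q), g p v)
        + (∑ v ∈ Finset.univ.filter (fun v : Fin n => v ≠ p ∧ v ≠ q), g q v)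
        + ∑ a ∈ Finset.univ.filter (fun a : Fin n => a ≠ p ∧ a ≠ q),
            ∑ v ∈ Finset.univ.filter (fun v : Fin n => v ≠ p ∧ v ≠ q), g a v := by
    have := sum_univ_split p q hpq
      (fun u => ∑ v ∈ Finset.univ.filter (fun v : Fin n => v ≠ p ∧ v ≠ q), g u v)
    linarith [this]
  have e5 : ∑ a ∈ Finset.univ.filter (fun a : Fin n => a ≠ p ∧ a ≠ q),
      ∑ v ∈ Finset.univ.filter (fun v : Fin n => v ≠ p ∧ v ≠ q), g a v = 0 := by
    apply Finset.sum_eq_zero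
    intro u hu
    apply Finset.sum_eq_zero
    intro v hv
    simp only [Finset.mem_filter] at hu hv
    exact h0 u v hu.2.1 hu.2.2 hv.2.1 hv.2.2
  have e6 : ∑ a ∈ Finset.univ.filter (fun a : Fin n => a ≠ p ∧ a ≠ q),
        (g a p + g a q + g p a + g q a)
      = (∑ a ∈ Finset.univ.filter (fun a : Fin n => a ≠ p ∧ a ≠ q), (g a p + g a q))
        + ((∑ a ∈ Finset.univ.filter (fun a : Fin n => a ≠ p ∧ a ≠ q), g p a)
          + ∑ a ∈ Finset.univ.filter (fun a : Fin n => a ≠ p ∧ a ≠ q), g q a) := by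
    rw [← Finset.sum_add_distrib, ← Finset.sum_add_distrib]
    exact Finset.sum_congr rfl fun a _ => by ring
  rw [e1, e2, e3, e4, e5, hdiag p, hdiag q, e6]
  ring

lemma len_lt_of_D (hn3 : 3 ≤ n) (x : Aff n) (p q : Fin n) (m : ℤ)
    (hm : (m = 0 ∧ p < q) ∨ (m = 1 ∧ q < p))
    (hD : 1 ≤ m + x.t q - x.t p + (if x.w p < x.w q then 1 else 0)) :
    len x < len (x * Aff.mk (Equiv.swap p q) (fun i => m * chiv p q i)) := by
  classical
  have hpq : p ≠ q := by
    rcases hm with ⟨-, h⟩ | ⟨-, h⟩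
    · exact ne_of_lt h
    · exact (ne_of_lt h).symm
  set s : Aff n := Aff.mk (Equiv.swap p q) (fun i => m * chiv p q i) with hs
  have hxs_w : ∀ v, (x * s).w v = x.w (Equiv.swap p q v) := fun v => rfl
  have hxs_t : ∀ u, (x * s).t u = x.t (Equiv.swap p q u) + m * chiv p q u := fun u => rfl
  have hswsw : ∀ v, Equiv.swap p q (Equiv.swap p q v) = v :=
    fun v => Equiv.swap_apply_self p q v
  have hchiswap : ∀ u, chiv p q (Equiv.swap p q u) = - chiv p q u := by
    intro u
    by_cases h1 : u = p
    · rw [h1, Equiv.swap_apply_left, chiv_right p q hpq, chiv_left p q hpq]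
    · by_cases h2 : u = q
      · rw [h2, Equiv.swap_apply_right, chiv_left p q hpq, chiv_right p q hpq]
        ring
      · rw [Equiv.swap_apply_of_ne_of_ne h1 h2, chiv_other p q u h1 h2]
        ring
  set G : Fin n → Fin n → ℤ := fun u v =>
    (if Equiv.swap p q u < Equiv.swap p q v
      then |Cf x u v - m * (chiv p q u - chiv p q v)| else 0)
    - (if u < v then |Cf x u v| else 0) with hG
  have hlen2 : (len (x * s) : ℤ) = ∑ u : Fin n, ∑ v : Fin n,
      (if Equiv.swap p q u < Equiv.swap p q v
        then |Cf x u v - m * (chiv p q u - chiv p q v)| else 0) := by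
    rw [lenZ]
    refine Fintype.sum_equiv (Equiv.swap p q) _ _ fun u => ?_
    refine Fintype.sum_equiv (Equiv.swap p q) _ _ fun v => ?_
    by_cases h : u < v
    · rw [if_pos h, if_pos (by rw [hswsw, hswsw]; exact h)]
      unfold Cf
      rw [hxs_w, hxs_w, hxs_t, hxs_t, hchiswap, hchiswap]
      congr 1
      ring
    · rw [if_neg h, if_neg (by rw [hswsw, hswsw]; exact h)]
  have hdiff : (len (x * s) : ℤ) - (len x : ℤ) = ∑ u : Fin n, ∑ v : Fin n, G u v := by
    rw [lenZ x, hlen2, ← Finset.sum_sub_distrib]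
    refine Finset.sum_congr rfl fun u _ => ?_
    rw [← Finset.sum_sub_distrib]
  have hGdiag : ∀ u, G u u = 0 := by
    intro u
    simp only [hG]
    rw [if_neg (lt_irrefl _), if_neg (lt_irrefl _)]
    ring
  have hG0 : ∀ u v, u ≠ p → u ≠ q → v ≠ p → v ≠ q → G u v = 0 := by
    intro u v h1 h2 h3 h4
    simp only [hG]
    rw [Equiv.swap_apply_of_ne_of_ne h1 h2, Equiv.swap_apply_of_ne_of_ne h3 h4,
        chiv_other p q u h1 h2, chiv_other p q v h3 h4,
        show Cf x u v - m * ((0:ℤ) - 0) = Cf x u v from by ring]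
    ring
  have hGap : ∀ a : Fin n, a ≠ p → a ≠ q →
      G a p = (if a < q then |Cf x a p + m| else 0) - (if a < p then |Cf x a p| else 0) := by
    intro a h1 h2
    simp only [hG]
    rw [Equiv.swap_apply_of_ne_of_ne h1 h2, Equiv.swap_apply_left,
        chiv_other p q a h1 h2, chiv_left p q hpq,
        show Cf x a p - m * ((0:ℤ) - 1) = Cf x a p + m from by ring]
  have hGaq : ∀ a : Fin n, a ≠ p → a ≠ q →
      G a q = (if a < p then |Cf x a q - m| else 0) - (if a < q then |Cf x a q| else 0) := by
    intro a h1 h2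
    simp only [hG]
    rw [Equiv.swap_apply_of_ne_of_ne h1 h2, Equiv.swap_apply_right,
        chiv_other p q a h1 h2, chiv_right p q hpq,
        show Cf x a q - m * ((0:ℤ) - -1) = Cf x a q - m from by ring]
  have hGpa : ∀ a : Fin n, a ≠ p → a ≠ q →
      G p a = (if q < a then |Cf x p a - m| else 0) - (if p < a then |Cf x p a| else 0) := by
    intro a h1 h2
    simp only [hG]
    rw [Equiv.swap_apply_of_ne_of_ne h1 h2, Equiv.swap_apply_left,
        chiv_other p q a h1 h2, chiv_left p q hpq,
        show Cf x p a - m * ((1:ℤ) - 0) = Cf x p a - m from by ring]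
  have hGqa : ∀ a : Fin n, a ≠ p → a ≠ q →
      G q a = (if p < a then |Cf x q a + m| else 0) - (if q < a then |Cf x q a| else 0) := by
    intro a h1 h2
    simp only [hG]
    rw [Equiv.swap_apply_of_ne_of_ne h1 h2, Equiv.swap_apply_right,
        chiv_other p q a h1 h2, chiv_right p q hpq,
        show Cf x q a - m * ((-1:ℤ) - 0) = Cf x q a + m from by ring]
  have hGpq : G p q
      = (if q < p then |Cf x p q - 2*m| else 0) - (if p < q then |Cf x p q| else 0) := by
    simp only [hG]
    rw [Equiv.swap_apply_left, Equiv.swap_apply_right, chiv_left p q hpq, chiv_right p q hpq,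
        show Cf x p q - m * ((1:ℤ) - -1) = Cf x p q - 2*m from by ring]
  have hGqp : G q p
      = (if p < q then |Cf x q p + 2*m| else 0) - (if q < p then |Cf x q p| else 0) := by
    simp only [hG]
    rw [Equiv.swap_apply_left, Equiv.swap_apply_right, chiv_left p q hpq, chiv_right p q hpq,
        show Cf x q p - m * ((-1:ℤ) - 1) = Cf x q p + 2*m from by ring]
  have hmain : 1 ≤ G p q + G q p := by
    rcases hm with ⟨hm0, hpq'⟩ | ⟨hm1, hpq'⟩
    · subst hm0
      rw [hGpq, hGqp]
      simp only [if_pos hpq', if_neg (lt_asymm hpq')]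
      have e : Cf x q p + 2*0 = 1 - Cf x p q := by
        rw [Cf_compl x hpq]
        ring
      rw [e]
      have hkey3 : Cf x p q ≤ 0 := by
        have hD' := hD
        unfold Cf
        by_cases hw : x.w p < x.w q
        · rw [if_pos hw] at hD'
          rw [if_neg (lt_asymm hw)]
          linarith
        · rw [if_neg hw] at hD'
          split_ifs <;> linarith
      rw [abs_of_nonpos hkey3, abs_of_nonneg (by linarith : (0:ℤ) ≤ 1 - Cf x p q)]
      linarith
    · subst hm1
      rw [hGpq, hGqp]
      simp only [if_pos hpq', if_neg (lt_asymm hpq')]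
      have e : Cf x p q - 2*1 = -(Cf x q p + 1) := by
        rw [Cf_compl x (Ne.symm hpq)]
        ring
      rw [e, abs_neg]
      have hkey3 : 0 ≤ Cf x q p := by
        have hD' := hD
        unfold Cf
        by_cases hw : x.w p < x.w q
        · rw [if_pos hw] at hD'
          rw [if_pos hw]
          linarith
        · rw [if_neg hw] at hD'
          rw [if_neg hw]
          linarith
      rw [abs_of_nonneg (by linarith : (0:ℤ) ≤ Cf x q p + 1), abs_of_nonneg hkey3]
      linarith
  have hA : ∀ a ∈ Finset.univ.filter (fun a : Fin n => a ≠ p ∧ a ≠ q),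
      0 ≤ G a p + G a q + G p a + G q a := by
    intro a haE
    rw [Finset.mem_filter] at haE
    obtain ⟨-, ha1, ha2⟩ := haE
    have e1 : Cf x p a = 1 - Cf x a p := Cf_compl x ha1
    have e2 : Cf x q a = 1 - Cf x a q := Cf_compl x ha2
    rcases hm with ⟨hm0, hpq'⟩ | ⟨hm1, hpq'⟩
    · subst hm0
      have key1 : Cf x a q ≤ Cf x a p := by
        have hD' := hD
        unfold Cf
        by_cases hw : x.w p < x.w q
        · rw [if_pos hw] at hD'
          by_cases h2 : x.w q < x.w a
          · rw [if_pos h2, if_pos (lt_trans hw h2)]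
            linarith
          · rw [if_neg h2]
            split_ifs <;> linarith
        · rw [if_neg hw] at hD'
          split_ifs <;> linarith
      rw [hGap a ha1 ha2, hGaq a ha1 ha2, hGpa a ha1 ha2, hGqa a ha1 ha2, e1, e2]
      simp only [add_zero, sub_zero]
      rcases lt_trichotomy a p with h1 | h1 | h1
      · have c1 : a < q := lt_trans h1 hpq'
        simp only [if_pos h1, if_pos c1, if_neg (lt_asymm h1), if_neg (lt_asymm c1)]
        linarith
      · exact absurd h1 ha1
      · rcases lt_trichotomy a q with h2 | h2 | h2
        · simp only [if_pos h2, if_neg (lt_asymm h1), if_neg (lt_asymm h2), if_pos h1]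
          rcases le_or_gt 1 (Cf x a p) with hc1 | hc1 <;>
            rcases le_or_gt 1 (Cf x a q) with hc2 | hc2
          · have e3 : |Cf x a p| = Cf x a p := abs_of_nonneg (by linarith)
            have e4 : |Cf x a q| = Cf x a q := abs_of_nonneg (by linarith)
            have e5 : |1 - Cf x a p| = Cf x a p - 1 := by
              rw [abs_of_nonpos (by linarith)]; ring
            have e6 : |1 - Cf x a q| = Cf x a q - 1 := by
              rw [abs_of_nonpos (by linarith)]; ring
            rw [e3, e4, e5, e6]
            linarith
          · have e3 : |Cf x a p| = Cf x a p := abs_of_nonneg (by linarith)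
            have e4 : |Cf x a q| = -Cf x a q := abs_of_nonpos (by linarith)
            have e5 : |1 - Cf x a p| = Cf x a p - 1 := by
              rw [abs_of_nonpos (by linarith)]; ring
            have e6 : |1 - Cf x a q| = 1 - Cf x a q := abs_of_nonneg (by linarith)
            rw [e3, e4, e5, e6]
            linarith
          · exact absurd key1 (by linarith)
          · have e3 : |Cf x a p| = -Cf x a p := abs_of_nonpos (by linarith)
            have e4 : |Cf x a q| = -Cf x a q := abs_of_nonpos (by linarith)
            have e5 : |1 - Cf x a p| = 1 - Cf x a p := abs_of_nonneg (by linarith)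
            have e6 : |1 - Cf x a q| = 1 - Cf x a q := abs_of_nonneg (by linarith)
            rw [e3, e4, e5, e6]
            linarith
        · exact absurd h2 ha2
        · simp only [if_pos h2, if_pos (lt_trans hpq' h2), if_neg (lt_asymm h2),
            if_neg (lt_asymm (lt_trans hpq' h2)), if_pos h1, if_neg (lt_asymm h1)]
          linarith
    · subst hm1
      have key2 : Cf x a p - Cf x a q ≥ -1 := by
        have hD' := hD
        unfold Cf
        by_cases hw : x.w p < x.w q
        · rw [if_pos hw] at hD'
          by_cases h2 : x.w q < x.w a
          · rw [if_pos h2, if_pos (lt_trans hw h2)]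
            linarith
          · rw [if_neg h2]
            split_ifs <;> linarith
        · rw [if_neg hw] at hD'
          split_ifs <;> linarith
      have key2' : Cf x q a - Cf x p a ≥ -1 := by
        have hD' := hD
        unfold Cf
        by_cases hw : x.w p < x.w q
        · rw [if_pos hw] at hD'
          by_cases h2 : x.w a < x.w p
          · rw [if_pos h2, if_pos (lt_trans h2 hw)]
            linarith
          · rw [if_neg h2]
            split_ifs <;> linarith
        · rw [if_neg hw] at hD'
          split_ifs <;> linarith
      rw [hGap a ha1 ha2, hGaq a ha1 ha2, hGpa a ha1 ha2, hGqa a ha1 ha2]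
      rcases lt_trichotomy a q with h1 | h1 | h1
      · have c1 : a < p := lt_trans h1 hpq'
        simp only [if_pos h1, if_pos c1, if_neg (lt_asymm h1), if_neg (lt_asymm c1)]
        rcases le_or_gt 0 (Cf x a p) with hc1 | hc1 <;>
          rcases le_or_gt 1 (Cf x a q) with hc2 | hc2
        · have e3 : |Cf x a p + 1| = Cf x a p + 1 := abs_of_nonneg (by linarith)
          have e4 : |Cf x a p| = Cf x a p := abs_of_nonneg hc1
          have e5 : |Cf x a q - 1| = Cf x a q - 1 := abs_of_nonneg (by linarith)
          have e6 : |Cf x a q| = Cf x a q := abs_of_nonneg (by linarith)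
          rw [e3, e4, e5, e6]
          linarith
        · have e3 : |Cf x a p + 1| = Cf x a p + 1 := abs_of_nonneg (by linarith)
          have e4 : |Cf x a p| = Cf x a p := abs_of_nonneg hc1
          have e5 : |Cf x a q - 1| = 1 - Cf x a q := by
            rw [abs_of_nonpos (by linarith)]; ring
          have e6 : |Cf x a q| = -Cf x a q := abs_of_nonpos (by linarith)
          rw [e3, e4, e5, e6]
          linarith
        · exact absurd key2 (by linarith)
        · have e3 : |Cf x a p + 1| = -(Cf x a p + 1) := abs_of_nonpos (by linarith)
          have e4 : |Cf x a p| = -Cf x a p := abs_of_nonpos (by linarith)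
          have e5 : |Cf x a q - 1| = 1 - Cf x a q := by
            rw [abs_of_nonpos (by linarith)]; ring
          have e6 : |Cf x a q| = -Cf x a q := abs_of_nonpos (by linarith)
          rw [e3, e4, e5, e6]
          linarith
      · exact absurd h1 ha2
      · rcases lt_trichotomy a p with h2 | h2 | h2
        · simp only [if_pos h2, if_pos h1, if_neg (lt_asymm h1), if_neg (lt_asymm h2)]
          have eA : |Cf x p a - 1| = |Cf x a p| := by
            rw [e1, show (1 : ℤ) - Cf x a p - 1 = -(Cf x a p) from by ring, abs_neg]
          have eB : |Cf x a q - 1| = |Cf x q a| := by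
            rw [e2, show Cf x a q - 1 = -((1:ℤ) - Cf x a q) from by ring, abs_neg]
          rw [eA, eB]
          linarith
        · exact absurd h2 ha1
        · simp only [if_pos h2, if_pos (lt_trans hpq' h2), if_neg (lt_asymm h2),
            if_neg (lt_asymm (lt_trans hpq' h2)), if_pos h1, if_neg (lt_asymm h1)]
          rcases le_or_gt (Cf x p a) 0 with hc1 | hc1 <;>
            rcases le_or_gt 0 (Cf x q a) with hc2 | hc2
          · have e3 : |Cf x p a - 1| = 1 - Cf x p a := by
              rw [abs_of_nonpos (by linarith)]; ring
            have e4 : |Cf x p a| = -Cf x p a := abs_of_nonpos hc1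
            have e5 : |Cf x q a + 1| = Cf x q a + 1 := abs_of_nonneg (by linarith)
            have e6 : |Cf x q a| = Cf x q a := abs_of_nonneg hc2
            rw [e3, e4, e5, e6]
            linarith
          · have e3 : |Cf x p a - 1| = 1 - Cf x p a := by
              rw [abs_of_nonpos (by linarith)]; ring
            have e4 : |Cf x p a| = -Cf x p a := abs_of_nonpos hc1
            have e5 : |Cf x q a + 1| = -(Cf x q a + 1) := abs_of_nonpos (by linarith)
            have e6 : |Cf x q a| = -Cf x q a := abs_of_nonpos (by linarith)
            rw [e3, e4, e5, e6]
            linarith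
          · have e3 : |Cf x p a - 1| = Cf x p a - 1 := abs_of_nonneg (by linarith)
            have e4 : |Cf x p a| = Cf x p a := abs_of_nonneg (by linarith)
            have e5 : |Cf x q a + 1| = Cf x q a + 1 := abs_of_nonneg (by linarith)
            have e6 : |Cf x q a| = Cf x q a := abs_of_nonneg hc2
            rw [e3, e4, e5, e6]
            linarith
          · exact absurd key2' (by linarith)
  have hsplit := sum_split p q hpq G hG0 hGdiag
  have hge : 0 ≤ ∑ a ∈ Finset.univ.filter (fun a : Fin n => a ≠ p ∧ a ≠ q),
      (G a p + G a q + G p a + G q a) := Finset.sum_nonneg hA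
  have hfin : (len x : ℤ) < (len (x * s) : ℤ) := by
    have : 1 ≤ (len (x * s) : ℤ) - (len x : ℤ) := by
      rw [hdiff, hsplit]
      linarith
    linarith
  exact_mod_cast hfin

lemma len_lt_sref (hn3 : 3 ≤ n) {b : Fin n → ℤ} (hb : IsPosRoot b) (hb1 : ∀ i, b i ≤ 1)
    (x : Aff n) (hpos : ∀ i, 0 ≤ actv x b i) : len x < len (x * sref b) := by
  obtain ⟨p, q, hpq, hf, -, -, -, -, hord, hsref⟩ := exists_data hn3 hb hb1
  rw [hsref]
  have hfγ : finPart (actv x b) = chiv (x.w p) (x.w q) := by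
    rw [finPart_actv hn3 x b]
    funext j
    rw [hf]
    unfold chiv
    congr 1
    · congr 1
      exact propext ⟨fun h => by rw [← h, Equiv.Perm.apply_inv_self],
        fun h => by rw [h, Equiv.Perm.inv_apply_self]⟩
    · congr 1
      exact propext ⟨fun h => by rw [← h, Equiv.Perm.apply_inv_self],
        fun h => by rw [h, Equiv.Perm.inv_apply_self]⟩
  have hwne : x.w p ≠ x.w q := fun h => hpq (x.w.injective h)
  have hcγ : coeff0 (actv x b) = coeff0 b - (x.t p - x.t q) := by
    rw [coeff0_actv hn3 x b, hf]
    rw [sum_mul_chiv (fun i => x.t i) p q]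
  have hORD := ord hn3 hfγ hpos hwne
  apply len_lt_of_D hn3 x p q (coeff0 b) hord
  rw [hcγ] at hORD
  rcases hORD with h | ⟨h1, h2⟩
  · have : 0 ≤ (if x.w p < x.w q then (1:ℤ) else 0) := by split_ifs <;> norm_num
    linarith
  · rw [if_pos h2]
    linarith

end Aux4

section Aux5

/-! #### group identities among the reflections -/

lemma chiv_swap (p q : Fin n) (hpq : p ≠ q) (u : Fin n) :
    chiv p q (Equiv.swap p q u) = - chiv p q u := by
  by_cases h1 : u = p
  · rw [h1, Equiv.swap_apply_left, chiv_right p q hpq, chiv_left p q hpq]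
  · by_cases h2 : u = q
    · rw [h2, Equiv.swap_apply_right, chiv_left p q hpq, chiv_right p q hpq]
      ring
    · rw [Equiv.swap_apply_of_ne_of_ne h1 h2, chiv_other p q u h1 h2]
      ring

lemma finPart_add (a b : Fin n → ℤ) (i : Fin n) :
    finPart (a + b) i = finPart a i + finPart b i := by
  unfold finPart
  simp only [Pi.add_apply]
  ring

lemma root_ne_zero {b : Fin n → ℤ} (hb : IsPosRoot b) : b ≠ 0 := by
  intro h
  have h1 : pairing b b = 2 := hb.1
  rw [h] at h1
  have h2 : pairing (0 : Fin n → ℤ) 0 = 0 := pairing_zero_left 0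
  omega

lemma sref_sq (hn3 : 3 ≤ n) {X : Fin n → ℤ} (hX : IsPosRoot X) (hX1 : ∀ i, X i ≤ 1) :
    sref X * sref X = 1 := by
  obtain ⟨p, q, hpq, hfX, -, -, -, -, -, hsX⟩ := exists_data hn3 hX hX1
  rw [hsX]
  apply Aff.ext
  · show Equiv.swap p q * Equiv.swap p q = 1
    exact Equiv.swap_mul_self p q
  · funext i
    show coeff0 X * chiv p q (Equiv.swap p q i) + coeff0 X * chiv p q i = 0
    rw [chiv_swap p q hpq]
    ring

lemma sref_comm (hn3 : 3 ≤ n) {X Z : Fin n → ℤ} (hX : IsPosRoot X) (hX1 : ∀ i, X i ≤ 1)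
    (hZ : IsPosRoot Z) (hZ1 : ∀ i, Z i ≤ 1) (hdisj : ∀ i, X i = 0 ∨ Z i = 0)
    (hperp : pairing X Z = 0) : sref X * sref Z = sref Z * sref X := by
  obtain ⟨p, q, hpq, hfX, hXsp, hXq, hXp, hXsq, -, hsX⟩ := exists_data hn3 hX hX1
  obtain ⟨p', q', hpq', hfZ, hZsp, hZq, hZp, hZsq, -, hsZ⟩ := exists_data hn3 hZ hZ1
  have hadj := pairing_adj hn3 hfX hXsp hXq hdisj
  have hZnn := hZ.2
  have hZp0 : Z p = 0 := by have := hZnn p; have := hZnn (fsucc q); omega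
  have hZsq0 : Z (fsucc q) = 0 := by have := hZnn p; have := hZnn (fsucc q); omega
  have hq'p : q' ≠ p := by intro h; rw [h] at hZq; omega
  have hq'q : q' ≠ q := by
    intro h
    rw [h] at hZq
    rcases hdisj q with hh | hh
    · rw [hXq] at hh; omega
    · omega
  have hp'p : p' ≠ p := by
    intro h
    rw [h] at hZsp
    rcases hdisj (fsucc p) with hh | hh
    · rw [hXsp] at hh; omega
    · omega
  have hp'q : p' ≠ q := by intro h; rw [h] at hZsp; omega
  have hwcomm : Equiv.swap p q * Equiv.swap p' q' = Equiv.swap p' q' * Equiv.swap p q := by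
    have h := Equiv.swap_apply_apply (Equiv.swap p q) p' q'
    rw [Equiv.swap_apply_of_ne_of_ne hp'p hp'q, Equiv.swap_apply_of_ne_of_ne hq'p hq'q,
        Equiv.swap_inv] at h
    calc Equiv.swap p q * Equiv.swap p' q'
        = (Equiv.swap p q * Equiv.swap p' q' * Equiv.swap p q) * Equiv.swap p q := by
          rw [mul_assoc, Equiv.swap_mul_self, mul_one]
      _ = Equiv.swap p' q' * Equiv.swap p q := by rw [← h]
  rw [hsX, hsZ]
  apply Aff.ext
  · exact hwcomm
  · funext i
    show coeff0 X * chiv p q (Equiv.swap p' q' i) + coeff0 Z * chiv p' q' i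
       = coeff0 Z * chiv p' q' (Equiv.swap p q i) + coeff0 X * chiv p q i
    have hA : chiv p q (Equiv.swap p' q' i) = chiv p q i := by
      by_cases h1 : i = p'
      · rw [h1, Equiv.swap_apply_left, chiv_other p q q' hq'p hq'q,
            chiv_other p q p' hp'p hp'q]
      · by_cases h2 : i = q'
        · rw [h2, Equiv.swap_apply_right, chiv_other p q p' hp'p hp'q,
              chiv_other p q q' hq'p hq'q]
        · rw [Equiv.swap_apply_of_ne_of_ne h1 h2]
    have hB : chiv p' q' (Equiv.swap p q i) = chiv p' q' i := by
      by_cases h1 : i = p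
      · rw [h1, Equiv.swap_apply_left, chiv_other p' q' q (Ne.symm hp'q) (Ne.symm hq'q),
            chiv_other p' q' p (Ne.symm hp'p) (Ne.symm hq'p)]
      · by_cases h2 : i = q
        · rw [h2, Equiv.swap_apply_right, chiv_other p' q' p (Ne.symm hp'p) (Ne.symm hq'p),
              chiv_other p' q' q (Ne.symm hp'q) (Ne.symm hq'q)]
        · rw [Equiv.swap_apply_of_ne_of_ne h1 h2]
    rw [hA, hB]
    ring

lemma sref_braid (hn3 : 3 ≤ n) {X Z : Fin n → ℤ} (hX : IsPosRoot X) (hX1 : ∀ i, X i ≤ 1)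
    (hZ : IsPosRoot Z) (hZ1 : ∀ i, Z i ≤ 1) (hdisj : ∀ i, X i = 0 ∨ Z i = 0)
    (hXZ : IsPosRoot (X + Z)) :
    sref X * sref Z * sref X = sref (X + Z) := by
  obtain ⟨p, q, hpq, hfX, hXsp, hXq, hXp, hXsq, -, hsX⟩ := exists_data hn3 hX hX1
  obtain ⟨p', q', hpq', hfZ, hZsp, hZq, hZp, hZsq, -, hsZ⟩ := exists_data hn3 hZ hZ1
  have hXXv : pairing X X = 2 := hX.1
  have hZZv : pairing Z Z = 2 := hZ.1
  have hpair : pairing X Z = -1 := by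
    have h2 : pairing (X + Z) (X + Z) = 2 := hXZ.1
    rw [pairing_add_left, pairing_add_right, pairing_add_right] at h2
    have hc := pairing_comm hn3 X Z
    linarith
  have hadj : Z p + Z (fsucc q) = 1 := by
    have := pairing_adj hn3 hfX hXsp hXq hdisj
    linarith
  have h0 : 0 < n := by omega
  have hm : coeff0 (X + Z) = coeff0 X + coeff0 Z := by
    rw [coeff0_eq h0, coeff0_eq h0, coeff0_eq h0]
    rfl
  have hZv : ∀ i, Z i = 0 ∨ Z i = 1 := fun i => by have := hZ.2 i; have := hZ1 i; omega
  have hcases : Z p = 1 ∧ Z (fsucc q) = 0 ∨ Z p = 0 ∧ Z (fsucc q) = 1 := by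
    have h1 := hZv p; have h2 := hZv (fsucc q); omega
  rcases hcases with ⟨hc1, hc2⟩ | ⟨hc1, hc2⟩
  · -- Z attaches before X : q' = p
    have hq'p : q' = p := by
      have hZfp : Z (fsucc p) = 0 := by
        rcases hdisj (fsucc p) with h | h
        · rw [hXsp] at h; omega
        · exact h
      have hv : finPart Z p = -1 := by
        show Z (fsucc p) - Z p = -1
        omega
      rw [hfZ] at hv
      unfold chiv at hv
      by_cases h1 : p = p'
      · by_cases h2 : p = q'
        · rw [if_pos h1, if_pos h2] at hv; omega
        · rw [if_pos h1, if_neg h2] at hv; omega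
      · by_cases h2 : p = q'
        · exact h2.symm
        · rw [if_neg h1, if_neg h2] at hv; omega
    rw [hq'p] at hsZ hfZ hZq hZsq hpq'
    have hp'p : p' ≠ p := hpq'
    have hp'q : p' ≠ q := by
      intro h
      have hfXZ : finPart (X + Z) = 0 := by
        funext i
        rw [finPart_add, hfX, hfZ, h, Pi.zero_apply]
        unfold chiv
        ring
      have h2 : pairing (X + Z) (X + Z) = 2 := hXZ.1
      rw [pairing_eq_finPart hn3, hfXZ] at h2
      simp at h2
    have hfXZ : finPart (X + Z) = chiv p' q := by
      funext i
      rw [finPart_add, hfX, hfZ]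
      unfold chiv
      ring
    have hsXZ := sref_eq hp'q hfXZ
    rw [hsX, hsZ, hsXZ, hm]
    apply Aff.ext
    · show Equiv.swap p q * Equiv.swap p' p * Equiv.swap p q = Equiv.swap p' q
      have h := Equiv.swap_apply_apply (Equiv.swap p q) p' p
      rw [Equiv.swap_apply_of_ne_of_ne hp'p hp'q, Equiv.swap_apply_left, Equiv.swap_inv] at h
      exact h.symm
    · funext i
      show coeff0 X * chiv p q (Equiv.swap p' p (Equiv.swap p q i))
          + coeff0 Z * chiv p' p (Equiv.swap p q i) + coeff0 X * chiv p q i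
        = (coeff0 X + coeff0 Z) * chiv p' q i
      by_cases h1 : i = p
      · rw [h1, Equiv.swap_apply_left,
            Equiv.swap_apply_of_ne_of_ne (Ne.symm hp'q) (Ne.symm hpq),
            chiv_right p q hpq, chiv_other p' p q (Ne.symm hp'q) (Ne.symm hpq),
            chiv_left p q hpq, chiv_other p' q p (Ne.symm hp'p) hpq]
        ring
      · by_cases h2 : i = q
        · rw [h2, Equiv.swap_apply_right, Equiv.swap_apply_right,
              chiv_other p q p' hp'p hp'q, chiv_right p' p hp'p,
              chiv_right p q hpq, chiv_right p' q hp'q]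
          ring
        · by_cases h3 : i = p'
          · rw [h3, Equiv.swap_apply_of_ne_of_ne hp'p hp'q, Equiv.swap_apply_left,
                chiv_left p q hpq, chiv_left p' p hp'p, chiv_other p q p' hp'p hp'q,
                chiv_left p' q hp'q]
            ring
          · rw [Equiv.swap_apply_of_ne_of_ne h1 h2, Equiv.swap_apply_of_ne_of_ne h3 h1,
                chiv_other p q i h1 h2, chiv_other p' p i h3 h1, chiv_other p' q i h3 h2]
            ring
  · -- Z attaches after X : p' = q
    have hp'q : p' = q := by
      have hZq0 : Z q = 0 := by
        rcases hdisj q with h | h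
        · rw [hXq] at h; omega
        · exact h
      have hv : finPart Z q = 1 := by
        show Z (fsucc q) - Z q = 1
        omega
      rw [hfZ] at hv
      unfold chiv at hv
      by_cases h1 : q = p'
      · exact h1.symm
      · rw [if_neg h1] at hv
        by_cases h2 : q = q'
        · rw [if_pos h2] at hv; omega
        · rw [if_neg h2] at hv; omega
    rw [hp'q] at hsZ hfZ hZsp hZp hpq'
    have hq'q : q' ≠ q := Ne.symm hpq'
    have hq'p : q' ≠ p := by
      intro h
      have hfXZ : finPart (X + Z) = 0 := by
        funext i
        rw [finPart_add, hfX, hfZ, h, Pi.zero_apply]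
        unfold chiv
        ring
      have h2 : pairing (X + Z) (X + Z) = 2 := hXZ.1
      rw [pairing_eq_finPart hn3, hfXZ] at h2
      simp at h2
    have hpq'' : p ≠ q' := fun h => hq'p h.symm
    have hfXZ : finPart (X + Z) = chiv p q' := by
      funext i
      rw [finPart_add, hfX, hfZ]
      unfold chiv
      ring
    have hsXZ := sref_eq hpq'' hfXZ
    rw [hsX, hsZ, hsXZ, hm]
    apply Aff.ext
    · show Equiv.swap p q * Equiv.swap q q' * Equiv.swap p q = Equiv.swap p q'
      have h := Equiv.swap_apply_apply (Equiv.swap p q) q q'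
      rw [Equiv.swap_apply_right, Equiv.swap_apply_of_ne_of_ne hq'p hq'q,
          Equiv.swap_inv] at h
      exact h.symm
    · funext i
      show coeff0 X * chiv p q (Equiv.swap q q' (Equiv.swap p q i))
          + coeff0 Z * chiv q q' (Equiv.swap p q i) + coeff0 X * chiv p q i
        = (coeff0 X + coeff0 Z) * chiv p q' i
      by_cases h1 : i = p
      · rw [h1, Equiv.swap_apply_left, Equiv.swap_apply_left,
            chiv_other p q q' hq'p hq'q, chiv_left q q' (Ne.symm hq'q)]
        rw [chiv_left p q hpq, chiv_left p q' hpq'']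
        ring
      · by_cases h2 : i = q
        · rw [h2, Equiv.swap_apply_right,
              Equiv.swap_apply_of_ne_of_ne hpq hpq'',
              chiv_left p q hpq, chiv_other q q' p hpq hpq'',
              chiv_right p q hpq, chiv_other p q' q (Ne.symm hpq) (Ne.symm hq'q)]
          ring
        · by_cases h3 : i = q'
          · rw [h3, Equiv.swap_apply_of_ne_of_ne hq'p hq'q, Equiv.swap_apply_right,
                chiv_right p q hpq, chiv_right q q' (Ne.symm hq'q),
                chiv_other p q q' hq'p hq'q, chiv_right p q' hpq'']
            ring
          · rw [Equiv.swap_apply_of_ne_of_ne h1 h2, Equiv.swap_apply_of_ne_of_ne h2 h3,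
                chiv_other p q i h1 h2, chiv_other q q' i h2 h3, chiv_other p q' i h1 h3]
            ring

lemma prod_comm_sref {L : List (Fin n → ℤ)} {s : Aff n}
    (h : ∀ b ∈ L, sref b * s = s * sref b) :
    (L.map sref).prod * s = s * (L.map sref).prod := by
  induction L with
  | nil => simp
  | cons b L ih =>
    simp only [List.map_cons, List.prod_cons]
    rw [mul_assoc, ih (fun b' hb' => h b' (List.mem_cons_of_mem _ hb')), ← mul_assoc,
        h b (List.mem_cons_self), mul_assoc]

lemma exists_last_prop {γ : Type} (P : γ → Prop) :
    ∀ (l : List γ), (∃ b ∈ l, P b) →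
    ∃ l₁ b l₂, l = l₁ ++ b :: l₂ ∧ P b ∧ ∀ c ∈ l₂, ¬ P c := by
  intro l
  induction l with
  | nil => rintro ⟨b, hb, -⟩; exact absurd hb (List.not_mem_nil)
  | cons a t ih =>
    intro h
    by_cases hex : ∃ b ∈ t, P b
    · obtain ⟨l₁, b, l₂, hdec, hPb, hl₂⟩ := ih hex
      exact ⟨a :: l₁, b, l₂, by rw [hdec]; rfl, hPb, hl₂⟩
    · obtain ⟨b, hb, hPb⟩ := h
      rcases List.mem_cons.mp hb with rfl | hb'
      · exact ⟨[], b, t, rfl, hPb, fun c hc hPc => hex ⟨c, hc, hPc⟩⟩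
      · exact absurd ⟨b, hb', hPb⟩ hex

lemma pairing_list_sum (L : List (Fin n → ℤ)) (z : Fin n → ℤ) :
    pairing L.sum z = (L.map (fun b => pairing b z)).sum := by
  induction L with
  | nil => simp [pairing_zero_left]
  | cons b L ih => simp [List.sum_cons, pairing_add_left, ih]

lemma pairing_sub_left (a a' b : Fin n → ℤ) :
    pairing (a - a') b = pairing a b - pairing a' b := by
  unfold pairing
  rw [← Finset.sum_sub_distrib]
  refine Finset.sum_congr rfl fun i _ => ?_
  rw [← Finset.sum_sub_distrib]
  refine Finset.sum_congr rfl fun j _ => ?_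
  simp [sub_mul]

lemma pairing_sub_right (a b b' : Fin n → ℤ) :
    pairing a (b - b') = pairing a b - pairing a b' := by
  unfold pairing
  rw [← Finset.sum_sub_distrib]
  refine Finset.sum_congr rfl fun i _ => ?_
  rw [← Finset.sum_sub_distrib]
  refine Finset.sum_congr rfl fun j _ => ?_
  simp [mul_sub]

lemma pairwise_disjoint_of_sum_le {L : List (Fin n → ℤ)} (h : ∀ b ∈ L, ∀ i, 0 ≤ b i)
    (hle : ∀ i, L.sum i ≤ 1) :
    List.Pairwise (fun b b' => ∀ i, b i = 0 ∨ b' i = 0) L := by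
  induction L with
  | nil => exact List.Pairwise.nil
  | cons b L ih =>
    have h5 : ∀ i, (b :: L).sum i = b i + L.sum i := fun i => by
      rw [list_sum_apply, List.map_cons, List.sum_cons, list_sum_apply]
    refine List.Pairwise.cons ?_ (ih (fun b' hb' => h b' (List.mem_cons_of_mem _ hb')) ?_)
    · intro b' hb' i
      have h1 := (h b (List.mem_cons_self)) i
      have h2 := member_le_sum (fun c hc => h c (List.mem_cons_of_mem _ hc)) hb' i
      have h3 := (h b' (List.mem_cons_of_mem _ hb')) i
      have h4 := hle i
      have h6 := h5 i
      omega
    · intro i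
      have h1 := (h b (List.mem_cons_self)) i
      have h4 := hle i
      have h6 := h5 i
      have h7 := list_sum_nonneg (fun c hc => h c (List.mem_cons_of_mem _ hc)) i
      omega

end Aux5

section Aux6

lemma sum_append_apply (A B : List (Fin n → ℤ)) (i : Fin n) :
    (A ++ B).sum i = A.sum i + B.sum i := by
  rw [List.sum_append, Pi.add_apply]

lemma sum_cons_apply (b : Fin n → ℤ) (B : List (Fin n → ℤ)) (i : Fin n) :
    (b :: B).sum i = b i + B.sum i := by
  rw [List.sum_cons, Pi.add_apply]

lemma sum_singleton_apply (b : Fin n → ℤ) (i : Fin n) :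
    ([b] : List (Fin n → ℤ)).sum i = b i := by
  rw [sum_cons_apply]
  show b i + (0 : Fin n → ℤ) i = b i
  rw [Pi.zero_apply, add_zero]

lemma eq_zero_of_sum_eq_zero {L : List (Fin n → ℤ)} (h : ∀ b ∈ L, ∀ i, 0 ≤ b i)
    (hz : ∀ i, L.sum i = 0) {b : Fin n → ℤ} (hb : b ∈ L) : b = 0 := by
  funext i
  have h1 := member_le_sum h hb i
  have h2 := (h b hb) i
  have h3 := hz i
  rw [Pi.zero_apply]
  omega

lemma surgery (hn3 : 3 ≤ n) {α : Fin n → ℤ} (hα : IsPosRoot α) (hα1 : ∀ i, α i ≤ 1)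
    (hαz : ∃ i, α i = 0) (l : List (Fin n → ℤ)) (hl : ∀ b ∈ l, IsPosRoot b)
    (hsum : l.sum = α) (hlen : 2 ≤ l.length) :
    ∃ (l₂ : List (Fin n → ℤ)) (β : Fin n → ℤ), IsPosRoot β ∧
      (∀ b ∈ l₂, IsPosRoot b) ∧ l₂.sum = α ∧ l₂.length + 1 = l.length ∧
      (l₂.map sref).prod = (l.map sref).prod * sref β ∧
      len ((l.map sref).prod) < len ((l.map sref).prod * sref β) := by
  classical
  obtain ⟨i0, hi0⟩ := hαz
  rcases List.eq_nil_or_concat l with rfl | ⟨l₀, z, rfl⟩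
  · simp at hlen
  simp only [List.concat_eq_append] at hl hsum hlen ⊢
  have hnn : ∀ b ∈ l₀ ++ [z], ∀ i, 0 ≤ b i := fun b hb => (hl b hb).2
  have hble1 : ∀ b ∈ l₀ ++ [z], ∀ i, b i ≤ 1 := by
    intro b hb i
    have h1 := member_le_sum hnn hb i
    have h2 := congrFun hsum i
    have h3 := hα1 i
    omega
  have hzmem : z ∈ l₀ ++ [z] := by simp
  have hzroot : IsPosRoot z := hl z hzmem
  have hz1 : ∀ i, z i ≤ 1 := hble1 z hzmem
  have hl₀sub : ∀ b ∈ l₀, b ∈ l₀ ++ [z] := fun b hb => by simp [hb]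
  have hpt0 : ∀ i, l₀.sum i + z i = α i := by
    intro i
    have h2 := congrFun hsum i
    rw [sum_append_apply, sum_singleton_apply] at h2
    exact h2
  have hl₀ne : l₀ ≠ [] := by
    intro h
    rw [h] at hlen
    simp at hlen
  have hzz : pairing z z = 2 := hzroot.1
  have hadj_ex : ∃ b ∈ l₀, pairing b z ≠ 0 := by
    by_contra hcon
    push_neg at hcon
    have h1 : pairing l₀.sum z = 0 := by
      rw [pairing_list_sum]
      apply List.sum_eq_zero
      intro v hv
      obtain ⟨b, hb, rfl⟩ := List.mem_map.mp hv
      exact hcon b hb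
    have hsum0 : l₀.sum = α - z := by
      funext i
      have := hpt0 i
      rw [Pi.sub_apply]
      omega
    have h2 : pairing (α - z) (α - z) = 0 := by
      rw [pairing_sub_left, pairing_sub_right, pairing_sub_right]
      have h3 : pairing α z = 2 := by
        have h4 : pairing (α - z) z = 0 := by rw [← hsum0]; exact h1
        rw [pairing_sub_left] at h4
        linarith
      have h5 : pairing z α = 2 := by rw [pairing_comm hn3]; exact h3
      have h6 : pairing α α = 2 := hα.1
      linarith
    have hl₀nn : ∀ i, 0 ≤ l₀.sum i := list_sum_nonneg (fun b hb => hnn b (hl₀sub b hb))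
    by_cases hzero : α - z = 0
    · obtain ⟨b₀, hb₀⟩ := List.exists_mem_of_ne_nil l₀ hl₀ne
      have hzero2 : ∀ i, l₀.sum i = 0 := by
        intro i
        have := congrFun (hsum0.trans hzero) i
        rw [Pi.zero_apply] at this
        exact this
      exact root_ne_zero (hl b₀ (hl₀sub b₀ hb₀))
        (eq_zero_of_sum_eq_zero (fun b hb => hnn b (hl₀sub b hb)) hzero2 hb₀)
    · have haz01 : ∀ i, (α - z) i = 0 ∨ (α - z) i = 1 := by
        intro i
        rw [Pi.sub_apply]
        have h7 := hpt0 i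
        have h8 := hl₀nn i
        have := hα1 i
        have := hzroot.2 i
        omega
      have hazz : ∃ i, (α - z) i = 0 :=
        ⟨i0, by
          rw [Pi.sub_apply, hi0]
          have := hzroot.2 i0
          have := hpt0 i0
          have := hl₀nn i0
          omega⟩
      have := two_le_pairing_self hn3 haz01 hzero hazz
      omega
  obtain ⟨U, x, X, hdec0, hPx, hXz⟩ := exists_last_prop (fun b => pairing b z ≠ 0) l₀ hadj_ex
  subst hdec0
  have hXzperp : ∀ ζ ∈ X, pairing ζ z = 0 := fun ζ hζ => not_not.mp (hXz ζ hζ)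
  have hxmem : x ∈ (U ++ x :: X) ++ [z] := by simp
  have hXsub : ∀ ζ ∈ X, ζ ∈ (U ++ x :: X) ++ [z] := fun ζ h => by simp [h]
  have hUsub : ∀ u ∈ U, u ∈ (U ++ x :: X) ++ [z] := fun u h => by simp [h]
  have hxroot := hl x hxmem
  have hx1 := hble1 x hxmem
  have hxx : pairing x x = 2 := hxroot.1
  have hUnn : ∀ i, 0 ≤ U.sum i := list_sum_nonneg (fun u hu => hnn u (hUsub u hu))
  have hXnn : ∀ i, 0 ≤ X.sum i := list_sum_nonneg (fun c hc => hnn c (hXsub c hc))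
  have hpt : ∀ i, U.sum i + x i + X.sum i + z i = α i := by
    intro i
    have h2 := hpt0 i
    rw [sum_append_apply, sum_cons_apply] at h2
    linarith
  have hdisj_xz : ∀ i, x i = 0 ∨ z i = 0 := by
    intro i
    have := hpt i; have := hUnn i; have := hXnn i
    have := hxroot.2 i; have := hzroot.2 i; have := hα1 i
    omega
  have hxzsum_le : ∀ i, x i + z i ≤ 1 := fun i => by
    have := hpt i; have := hUnn i; have := hXnn i; have := hα1 i; omega
  have hxznn : ∀ i, 0 ≤ (x + z) i := fun i => by
    rw [Pi.add_apply]; have := hxroot.2 i; have := hzroot.2 i; omega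
  have hxz01 : ∀ i, (x + z) i = 0 ∨ (x + z) i = 1 := fun i => by
    rw [Pi.add_apply]
    have := hxzsum_le i; have := hxroot.2 i; have := hzroot.2 i; omega
  have hxzne : (x + z) ≠ 0 := by
    intro h
    apply root_ne_zero hxroot
    funext i
    have h2 := congrFun h i
    rw [Pi.add_apply, Pi.zero_apply] at h2
    have := hxroot.2 i; have := hzroot.2 i
    rw [Pi.zero_apply]
    omega
  have hxzzero : ∃ i, (x + z) i = 0 :=
    ⟨i0, by
      rw [Pi.add_apply]
      have := hpt i0; have := hUnn i0; have := hXnn i0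
      have := hxroot.2 i0; have := hzroot.2 i0
      omega⟩
  have hpxz : pairing x z = -1 := by
    have h1 : pairing x z ≤ 0 := pairing_nonpos hn3 hxroot.2 hzroot.2 hdisj_xz
    have h2 : -1 ≤ pairing x z := by
      by_contra hcon
      push_neg at hcon
      have h3 := two_le_pairing_self hn3 hxz01 hxzne hxzzero
      rw [pairing_add_left, pairing_add_right, pairing_add_right] at h3
      have hc := pairing_comm hn3 x z
      linarith
    have h4 : pairing x z ≠ 0 := hPx
    omega
  have hxzroot : IsPosRoot (x + z) := by
    constructor
    · show pairing (x + z) (x + z) = 2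
      rw [pairing_add_left, pairing_add_right, pairing_add_right]
      have hc := pairing_comm hn3 x z
      linarith
    · exact hxznn
  have hxz1 : ∀ i, (x + z) i ≤ 1 := fun i => by rw [Pi.add_apply]; exact hxzsum_le i
  have hpwl : List.Pairwise (fun b b' => ∀ i, b i = 0 ∨ b' i = 0) ((U ++ x :: X) ++ [z]) :=
    pairwise_disjoint_of_sum_le hnn (fun i => by
      have := congrFun hsum i; have := hα1 i; omega)
  have hsqx := sref_sq hn3 hxroot hx1
  have hsqz := sref_sq hn3 hzroot hz1
  have hbrxz : sref x * sref z * sref x = sref (x + z) :=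
    sref_braid hn3 hxroot hx1 hzroot hz1 hdisj_xz hxzroot
  by_cases hex2 : ∃ ζ ∈ X, pairing ζ x ≠ 0
  · -- case with an inner letter adjacent to x
    obtain ⟨X₁, ξ₀, X₂, hdecX, hPξ, hX₂x⟩ :=
      exists_last_prop (fun b => pairing b x ≠ 0) X hex2
    subst hdecX
    have hX₂perp : ∀ ζ ∈ X₂, pairing ζ x = 0 := fun ζ hζ => not_not.mp (hX₂x ζ hζ)
    have hξmem : ξ₀ ∈ (U ++ x :: (X₁ ++ ξ₀ :: X₂)) ++ [z] := by simp
    have hξroot := hl ξ₀ hξmem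
    have hξ1 := hble1 ξ₀ hξmem
    have hX₁sub : ∀ ζ ∈ X₁, ζ ∈ (U ++ x :: (X₁ ++ ξ₀ :: X₂)) ++ [z] := fun ζ h => by simp [h]
    have hX₂sub : ∀ ζ ∈ X₂, ζ ∈ (U ++ x :: (X₁ ++ ξ₀ :: X₂)) ++ [z] := fun ζ h => by simp [h]
    have hX₁nn : ∀ i, 0 ≤ X₁.sum i := list_sum_nonneg (fun c hc => hnn c (hX₁sub c hc))
    have hX₂nn : ∀ i, 0 ≤ X₂.sum i := list_sum_nonneg (fun c hc => hnn c (hX₂sub c hc))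
    have hpt5 : ∀ i, U.sum i + x i + X₁.sum i + ξ₀ i + X₂.sum i + z i = α i := by
      intro i
      have h2 := hpt i
      rw [sum_append_apply X₁ (ξ₀ :: X₂) i, sum_cons_apply ξ₀ X₂ i] at h2
      linarith
    have hξξ : pairing ξ₀ ξ₀ = 2 := hξroot.1
    have hdisj_xξ : ∀ i, x i = 0 ∨ ξ₀ i = 0 := by
      intro i
      have := hpt5 i; have := hUnn i; have := hX₁nn i; have := hX₂nn i
      have := hxroot.2 i; have := hξroot.2 i; have := hzroot.2 i; have := hα1 i
      omega
    have hxξnn : ∀ i, 0 ≤ (x + ξ₀) i := fun i => by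
      rw [Pi.add_apply]; have := hxroot.2 i; have := hξroot.2 i; omega
    have hxξ01 : ∀ i, (x + ξ₀) i = 0 ∨ (x + ξ₀) i = 1 := fun i => by
      rw [Pi.add_apply]
      have := hpt5 i; have := hUnn i; have := hX₁nn i; have := hX₂nn i
      have := hxroot.2 i; have := hξroot.2 i; have := hzroot.2 i; have := hα1 i
      omega
    have hxξne : (x + ξ₀) ≠ 0 := by
      intro h
      apply root_ne_zero hxroot
      funext i
      have h2 := congrFun h i
      rw [Pi.add_apply, Pi.zero_apply] at h2
      have := hxroot.2 i; have := hξroot.2 i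
      rw [Pi.zero_apply]
      omega
    have hxξzero : ∃ i, (x + ξ₀) i = 0 :=
      ⟨i0, by
        rw [Pi.add_apply]
        have := hpt5 i0; have := hUnn i0; have := hX₁nn i0; have := hX₂nn i0
        have := hxroot.2 i0; have := hξroot.2 i0; have := hzroot.2 i0
        omega⟩
    have hpξx : pairing ξ₀ x = -1 := by
      have h1 : pairing ξ₀ x ≤ 0 :=
        pairing_nonpos hn3 hξroot.2 hxroot.2 (fun i => (hdisj_xξ i).symm)
      have h2 : -1 ≤ pairing ξ₀ x := by
        by_contra hcon
        push_neg at hcon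
        have h3 := two_le_pairing_self hn3 hxξ01 hxξne hxξzero
        rw [pairing_add_left, pairing_add_right, pairing_add_right] at h3
        have hc := pairing_comm hn3 x ξ₀
        linarith
      have h4 : pairing ξ₀ x ≠ 0 := hPξ
      omega
    have hpxξ : pairing x ξ₀ = -1 := by rw [pairing_comm hn3]; exact hpξx
    have hxξroot : IsPosRoot (x + ξ₀) := by
      constructor
      · show pairing (x + ξ₀) (x + ξ₀) = 2
        rw [pairing_add_left, pairing_add_right, pairing_add_right]
        linarith
      · exact hxξnn
    have hxξ1 : ∀ i, (x + ξ₀) i ≤ 1 := fun i => by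
      have := hxξ01 i; omega
    -- all letters of X₁ are perpendicular to x
    obtain ⟨p, q, hpq, hfx, hxsp, hxq, hxp, hxsq, -, -⟩ := exists_data hn3 hxroot hx1
    have hX₁perp : ∀ ζ ∈ X₁, pairing ζ x = 0 := by
      intro ζ hζ
      by_contra hcon
      have hζroot := hl ζ (hX₁sub ζ hζ)
      have hζle : ∀ i, ζ i ≤ X₁.sum i :=
        member_le_sum (fun c hc => hnn c (hX₁sub c hc)) hζ
      have hdisj_xζ : ∀ i, x i = 0 ∨ ζ i = 0 := by
        intro i
        have := hζle i
        have := hpt5 i; have := hUnn i; have := hX₂nn i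
        have := hxroot.2 i; have := hζroot.2 i; have := hξroot.2 i
        have := hzroot.2 i; have := hα1 i
        omega
      have hm1 := pairing_adj hn3 hfx hxsp hxq hdisj_xζ
      have hm2 := pairing_adj hn3 hfx hxsp hxq hdisj_xξ
      have hm3 := pairing_adj hn3 hfx hxsp hxq hdisj_xz
      have h1 : 1 ≤ ζ p + ζ (fsucc q) := by
        have hne : pairing x ζ ≠ 0 := by
          rw [pairing_comm hn3]; exact hcon
        have := hζroot.2 p; have := hζroot.2 (fsucc q)
        omega
      have h2 : 1 ≤ ξ₀ p + ξ₀ (fsucc q) := by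
        have hne : pairing x ξ₀ ≠ 0 := by rw [hpxξ]; omega
        have := hξroot.2 p; have := hξroot.2 (fsucc q)
        omega
      have h3 : 1 ≤ z p + z (fsucc q) := by
        have hne : pairing x z ≠ 0 := hPx
        have := hzroot.2 p; have := hzroot.2 (fsucc q)
        omega
      have hb1 : ζ p + ξ₀ p + z p ≤ 1 := by
        have := hζle p
        have := hpt5 p; have := hUnn p; have := hX₂nn p
        have := hxroot.2 p; have := hα1 p
        have := list_sum_nonneg (fun c hc => hnn c (hX₁sub c hc)) p
        have hz2 : ζ p + ξ₀ p + z p ≤ X₁.sum p + ξ₀ p + z p := by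
          have := hζle p; omega
        omega
      have hb2 : ζ (fsucc q) + ξ₀ (fsucc q) + z (fsucc q) ≤ 1 := by
        have := hζle (fsucc q)
        have := hpt5 (fsucc q); have := hUnn (fsucc q); have := hX₂nn (fsucc q)
        have := hxroot.2 (fsucc q); have := hα1 (fsucc q)
        omega
      omega
    -- group identities
    have hbr1 : sref z * sref (x + z) = sref x * sref z := by
      have hbrzx : sref z * sref x * sref z = sref (x + z) := by
        have h := sref_braid hn3 hzroot hz1 hxroot hx1 (fun i => (hdisj_xz i).symm)
          (by rw [add_comm z x]; exact hxzroot)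
        rw [add_comm z x] at h
        exact h
      calc sref z * sref (x + z) = sref z * (sref z * sref x * sref z) := by rw [hbrzx]
        _ = (sref z * sref z) * (sref x * sref z) := by simp only [mul_assoc]
        _ = sref x * sref z := by rw [hsqz, one_mul]
    have hbrxξ : sref x * sref ξ₀ * sref x = sref (x + ξ₀) :=
      sref_braid hn3 hxroot hx1 hξroot hξ1 hdisj_xξ hxξroot
    have hbr2 : sref ξ₀ * sref x = sref x * sref (x + ξ₀) := by
      calc sref ξ₀ * sref x = (sref x * sref x) * (sref ξ₀ * sref x) := by
            rw [hsqx, one_mul]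
        _ = sref x * (sref x * sref ξ₀ * sref x) := by simp only [mul_assoc]
        _ = sref x * sref (x + ξ₀) := by rw [hbrxξ]
    have hdisjX₁x : ∀ ζ ∈ X₁, ∀ i, ζ i = 0 ∨ x i = 0 := by
      intro ζ hζ i
      have hζle := member_le_sum (fun c hc => hnn c (hX₁sub c hc)) hζ i
      have := hpt5 i; have := hUnn i; have := hX₂nn i
      have := hxroot.2 i; have := (hl ζ (hX₁sub ζ hζ)).2 i
      have := hξroot.2 i; have := hzroot.2 i; have := hα1 i
      omega
    have hdisjX₂x : ∀ ζ ∈ X₂, ∀ i, ζ i = 0 ∨ x i = 0 := by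
      intro ζ hζ i
      have hζle := member_le_sum (fun c hc => hnn c (hX₂sub c hc)) hζ i
      have := hpt5 i; have := hUnn i; have := hX₁nn i
      have := hxroot.2 i; have := (hl ζ (hX₂sub ζ hζ)).2 i
      have := hξroot.2 i; have := hzroot.2 i; have := hα1 i
      omega
    have hcomm1 : (X₁.map sref).prod * sref x = sref x * (X₁.map sref).prod :=
      prod_comm_sref (fun ζ hζ => sref_comm hn3 (hl ζ (hX₁sub ζ hζ)) (hble1 ζ (hX₁sub ζ hζ))
        hxroot hx1 (hdisjX₁x ζ hζ) (hX₁perp ζ hζ))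
    have hcomm2 : (X₂.map sref).prod * sref x = sref x * (X₂.map sref).prod :=
      prod_comm_sref (fun ζ hζ => sref_comm hn3 (hl ζ (hX₂sub ζ hζ)) (hble1 ζ (hX₂sub ζ hζ))
        hxroot hx1 (hdisjX₂x ζ hζ) (hX₂perp ζ hζ))
    have hvdec : (((U ++ x :: (X₁ ++ ξ₀ :: X₂)) ++ [z]).map sref).prod
        = (U.map sref).prod * (sref x * ((X₁.map sref).prod
            * (sref ξ₀ * ((X₂.map sref).prod * sref z)))) := by
      simp only [List.map_append, List.map_cons, List.map_nil, List.prod_append,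
        List.prod_cons, List.prod_nil, mul_one, mul_assoc]
    have hv2dec : ((U ++ (X₁ ++ ((x + ξ₀) :: (X₂ ++ [z])))).map sref).prod
        = (U.map sref).prod * ((X₁.map sref).prod
            * (sref (x + ξ₀) * ((X₂.map sref).prod * sref z))) := by
      simp only [List.map_append, List.map_cons, List.map_nil, List.prod_append,
        List.prod_cons, List.prod_nil, mul_one, mul_assoc]
    have hkey : (sref x * ((X₁.map sref).prod * (sref ξ₀ * ((X₂.map sref).prod * sref z))))
          * sref (x + z)
        = (X₁.map sref).prod * (sref (x + ξ₀) * ((X₂.map sref).prod * sref z)) := by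
      calc (sref x * ((X₁.map sref).prod * (sref ξ₀ * ((X₂.map sref).prod * sref z))))
            * sref (x + z)
          = sref x * ((X₁.map sref).prod * (sref ξ₀ * ((X₂.map sref).prod
              * (sref z * sref (x + z))))) := by simp only [mul_assoc]
        _ = sref x * ((X₁.map sref).prod * (sref ξ₀ * ((X₂.map sref).prod
              * (sref x * sref z)))) := by rw [hbr1]
        _ = sref x * ((X₁.map sref).prod * (sref ξ₀ * (((X₂.map sref).prod
              * sref x) * sref z))) := by simp only [mul_assoc]
        _ = sref x * ((X₁.map sref).prod * (sref ξ₀ * ((sref x * (X₂.map sref).prod)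
              * sref z))) := by rw [hcomm2]
        _ = sref x * ((X₁.map sref).prod * ((sref ξ₀ * sref x) * ((X₂.map sref).prod
              * sref z))) := by simp only [mul_assoc]
        _ = sref x * ((X₁.map sref).prod * ((sref x * sref (x + ξ₀)) * ((X₂.map sref).prod
              * sref z))) := by rw [hbr2]
        _ = sref x * (((X₁.map sref).prod * sref x) * (sref (x + ξ₀) * ((X₂.map sref).prod
              * sref z))) := by simp only [mul_assoc]
        _ = sref x * ((sref x * (X₁.map sref).prod) * (sref (x + ξ₀) * ((X₂.map sref).prod
              * sref z))) := by rw [hcomm1]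
        _ = (sref x * sref x) * ((X₁.map sref).prod * (sref (x + ξ₀) * ((X₂.map sref).prod
              * sref z))) := by simp only [mul_assoc]
        _ = (X₁.map sref).prod * (sref (x + ξ₀) * ((X₂.map sref).prod * sref z)) := by
              rw [hsqx, one_mul]
    -- the action certificate
    have e1 : actv (sref z) (x + z) = x := by
      have hp1 : pairing (x + z) z = 1 := by
        rw [pairing_add_left]
        linarith
      rw [actv_sref_pt hn3 hzroot hz1, hp1]
      funext i
      rw [Pi.add_apply]
      ring
    have e2 : actv ((X₂.map sref).prod) x = x :=
      actv_prod_fix hn3 X₂ x (fun ζ hζ => ⟨hl ζ (hX₂sub ζ hζ), hble1 ζ (hX₂sub ζ hζ),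
        by rw [pairing_comm hn3]; exact hX₂perp ζ hζ⟩)
    have e3 : actv (sref ξ₀) x = x + ξ₀ := by
      rw [actv_sref_pt hn3 hξroot hξ1, hpxξ]
      funext i
      rw [Pi.add_apply]
      ring
    obtain ⟨z₁, hz₁e, hz₁nn, hz₁supp⟩ := actv_prod_nonneg hn3 X₁ (x + ξ₀)
      (fun ζ hζ => ⟨hl ζ (hX₁sub ζ hζ), hble1 ζ (hX₁sub ζ hζ)⟩)
      (List.Pairwise.sublist (((List.sublist_append_left X₁ (ξ₀ :: X₂)).trans
        (List.sublist_cons_self x _ )).trans (((List.sublist_append_right U _)).trans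
        (List.sublist_append_left _ [z]))) hpwl)
      (fun ζ hζ i => by
        have hζle := member_le_sum (fun c hc => hnn c (hX₁sub c hc)) hζ i
        rw [Pi.add_apply]
        have := hpt5 i; have := hUnn i; have := hX₂nn i
        have := hxroot.2 i; have := (hl ζ (hX₁sub ζ hζ)).2 i
        have := hξroot.2 i; have := hzroot.2 i; have := hα1 i
        omega)
      hxξnn
    have hz₁x : ∀ i, x i ≠ 0 → z₁ i = 0 := by
      intro i hxi
      apply hz₁supp
      have := hpt5 i; have := hUnn i; have := hX₂nn i
      have := hxroot.2 i; have := hξroot.2 i; have := hzroot.2 i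
      have := hα1 i; have := hX₁nn i
      omega
    have hKz₁ : pairing z₁ x ≤ 0 := by
      apply pairing_nonpos hn3 hz₁nn hxroot.2
      intro i
      by_cases hxi : x i = 0
      · exact Or.inr hxi
      · exact Or.inl (hz₁x i hxi)
    have hK : pairing ((x + ξ₀) + z₁) x = 1 + pairing z₁ x := by
      rw [pairing_add_left, pairing_add_left]
      linarith
    have hγ₃nn : ∀ i, 0 ≤ ((x + ξ₀) + z₁) i - pairing ((x + ξ₀) + z₁) x * x i := by
      intro i
      rw [hK]
      by_cases hxi : x i = 0
      · rw [hxi, mul_zero, sub_zero]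
        simp only [Pi.add_apply]
        have := hxroot.2 i; have := hξroot.2 i; have := hz₁nn i
        omega
      · have hxi1 : x i = 1 := by have := hxroot.2 i; have := hx1 i; omega
        have hξ00 : ξ₀ i = 0 := by
          rcases hdisj_xξ i with h | h
          · omega
          · exact h
        have hz₁0 : z₁ i = 0 := hz₁x i hxi
        simp only [Pi.add_apply]
        rw [hxi1, hξ00, hz₁0, mul_one]
        linarith
    obtain ⟨z₂, hz₂e, hz₂nn, -⟩ := actv_prod_nonneg hn3 U
      (fun i => ((x + ξ₀) + z₁) i - pairing ((x + ξ₀) + z₁) x * x i)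
      (fun u hu => ⟨hl u (hUsub u hu), hble1 u (hUsub u hu)⟩)
      (List.Pairwise.sublist ((List.sublist_append_left U (x :: (X₁ ++ ξ₀ :: X₂))).trans
        (List.sublist_append_left _ [z])) hpwl)
      (fun u hu i => by
        by_cases hui : u i = 0
        · exact Or.inr hui
        · left
          have hu1 : 1 ≤ u i := by have := (hl u (hUsub u hu)).2 i; omega
          have hUi : 1 ≤ U.sum i :=
            le_trans hu1 (member_le_sum (fun c hc => hnn c (hUsub c hc)) hu i)
          have := hpt5 i; have := hX₁nn i; have := hX₂nn i
          have := hxroot.2 i; have := hξroot.2 i; have := hzroot.2 i; have := hα1 i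
          have hx0 : x i = 0 := by omega
          have hξ00 : ξ₀ i = 0 := by omega
          have hz₁0 : z₁ i = 0 := by
            apply hz₁supp
            omega
          simp only [Pi.add_apply]
          rw [hx0, hξ00, hz₁0, mul_zero]
          ring)
      hγ₃nn
    have hactv : actv ((((U ++ x :: (X₁ ++ ξ₀ :: X₂)) ++ [z]).map sref).prod) (x + z)
        = (fun i => ((x + ξ₀) + z₁) i - pairing ((x + ξ₀) + z₁) x * x i) + z₂ := by
      rw [hvdec, actv_mul hn3, actv_mul hn3, actv_mul hn3, actv_mul hn3, actv_mul hn3, e1,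
          e2, e3, hz₁e, actv_sref_pt hn3 hxroot hx1, hz₂e]
    have hpos : ∀ i, 0 ≤ actv ((((U ++ x :: (X₁ ++ ξ₀ :: X₂)) ++ [z]).map sref).prod)
        (x + z) i := by
      intro i
      rw [hactv, Pi.add_apply]
      have := hγ₃nn i
      have := hz₂nn i
      omega
    refine ⟨U ++ (X₁ ++ ((x + ξ₀) :: (X₂ ++ [z]))), x + z, hxzroot, ?_, ?_, ?_, ?_,
      len_lt_sref hn3 hxzroot hxz1 _ hpos⟩
    · intro b hb
      simp only [List.mem_append, List.mem_cons, List.mem_singleton] at hb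
      rcases hb with h | h | rfl | h | (rfl | h)
      · exact hl b (hUsub b h)
      · exact hl b (hX₁sub b h)
      · exact hxξroot
      · exact hl b (hX₂sub b h)
      · exact hzroot
      · exact absurd h (List.not_mem_nil)
    · funext i
      rw [sum_append_apply U _ i, sum_append_apply X₁ _ i, sum_cons_apply (x + ξ₀) _ i,
          sum_append_apply X₂ [z] i, sum_singleton_apply z i, Pi.add_apply]
      have := hpt5 i
      omega
    · simp only [List.length_append, List.length_cons, List.length_nil]
      try omega
    · rw [hv2dec, hvdec, mul_assoc, hkey]
  · -- no inner letter adjacent to x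
    push_neg at hex2
    have hXxperp : ∀ ζ ∈ X, pairing ζ x = 0 := fun ζ hζ => hex2 ζ hζ
    have hdisjXx : ∀ ζ ∈ X, ∀ i, ζ i = 0 ∨ x i = 0 := by
      intro ζ hζ i
      have hζle := member_le_sum (fun c hc => hnn c (hXsub c hc)) hζ i
      have := hpt i; have := hUnn i
      have := hxroot.2 i; have := (hl ζ (hXsub ζ hζ)).2 i
      have := hzroot.2 i; have := hα1 i
      omega
    have hdisjXz : ∀ ζ ∈ X, ∀ i, ζ i = 0 ∨ z i = 0 := by
      intro ζ hζ i
      have hζle := member_le_sum (fun c hc => hnn c (hXsub c hc)) hζ i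
      have := hpt i; have := hUnn i
      have := hxroot.2 i; have := (hl ζ (hXsub ζ hζ)).2 i
      have := hzroot.2 i; have := hα1 i
      omega
    have hcommXx : (X.map sref).prod * sref x = sref x * (X.map sref).prod :=
      prod_comm_sref (fun ζ hζ => sref_comm hn3 (hl ζ (hXsub ζ hζ)) (hble1 ζ (hXsub ζ hζ))
        hxroot hx1 (hdisjXx ζ hζ) (hXxperp ζ hζ))
    have hcommXz : (X.map sref).prod * sref z = sref z * (X.map sref).prod :=
      prod_comm_sref (fun ζ hζ => sref_comm hn3 (hl ζ (hXsub ζ hζ)) (hble1 ζ (hXsub ζ hζ))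
        hzroot hz1 (hdisjXz ζ hζ) (hXzperp ζ hζ))
    have hvdec0 : (((U ++ x :: X) ++ [z]).map sref).prod
        = (U.map sref).prod * (sref x * ((X.map sref).prod * sref z)) := by
      simp only [List.map_append, List.map_cons, List.map_nil, List.prod_append,
        List.prod_cons, List.prod_nil, mul_one, mul_assoc]
    have hv2dec0 : ((U ++ ((x + z) :: X)).map sref).prod
        = (U.map sref).prod * (sref (x + z) * (X.map sref).prod) := by
      simp only [List.map_append, List.map_cons, List.map_nil, List.prod_append,
        List.prod_cons, List.prod_nil, mul_one, mul_assoc]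
    have hkey0 : (sref x * ((X.map sref).prod * sref z)) * sref x
        = sref (x + z) * (X.map sref).prod := by
      calc (sref x * ((X.map sref).prod * sref z)) * sref x
          = sref x * ((sref z * (X.map sref).prod) * sref x) := by
            rw [hcommXz]; simp only [mul_assoc]
        _ = sref x * (sref z * ((X.map sref).prod * sref x)) := by simp only [mul_assoc]
        _ = sref x * (sref z * (sref x * (X.map sref).prod)) := by rw [hcommXx]
        _ = (sref x * sref z * sref x) * (X.map sref).prod := by simp only [mul_assoc]
        _ = sref (x + z) * (X.map sref).prod := by rw [hbrxz]
    have e1 : actv (sref z) x = x + z := by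
      rw [actv_sref_pt hn3 hzroot hz1, hpxz]
      funext i
      rw [Pi.add_apply]
      ring
    have e2 : actv ((X.map sref).prod) (x + z) = x + z := by
      apply actv_prod_fix hn3 X (x + z)
      intro ζ hζ
      refine ⟨hl ζ (hXsub ζ hζ), hble1 ζ (hXsub ζ hζ), ?_⟩
      rw [pairing_add_left]
      have h1 : pairing x ζ = 0 := by rw [pairing_comm hn3]; exact hXxperp ζ hζ
      have h2 : pairing z ζ = 0 := by rw [pairing_comm hn3]; exact hXzperp ζ hζ
      linarith
    have e3 : actv (sref x) (x + z) = z := by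
      have hp1 : pairing (x + z) x = 1 := by
        rw [pairing_add_left]
        have hc := pairing_comm hn3 z x
        linarith
      rw [actv_sref_pt hn3 hxroot hx1, hp1]
      funext i
      rw [Pi.add_apply]
      ring
    obtain ⟨z₂, hz₂e, hz₂nn, -⟩ := actv_prod_nonneg hn3 U z
      (fun u hu => ⟨hl u (hUsub u hu), hble1 u (hUsub u hu)⟩)
      (List.Pairwise.sublist ((List.sublist_append_left U (x :: X)).trans
        (List.sublist_append_left _ [z])) hpwl)
      (fun u hu i => by
        by_cases hui : u i = 0
        · exact Or.inr hui
        · left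
          have hu1 : 1 ≤ u i := by have := (hl u (hUsub u hu)).2 i; omega
          have hUi : 1 ≤ U.sum i :=
            le_trans hu1 (member_le_sum (fun c hc => hnn c (hUsub c hc)) hu i)
          have := hpt i; have := hXnn i
          have := hxroot.2 i; have := hzroot.2 i; have := hα1 i
          omega)
      hzroot.2
    have hactv : actv ((((U ++ x :: X) ++ [z]).map sref).prod) x = z + z₂ := by
      rw [hvdec0, actv_mul hn3, actv_mul hn3, actv_mul hn3, e1, e2, e3, hz₂e]
    have hpos : ∀ i, 0 ≤ actv ((((U ++ x :: X) ++ [z]).map sref).prod) x i := by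
      intro i
      rw [hactv, Pi.add_apply]
      have := hzroot.2 i
      have := hz₂nn i
      omega
    refine ⟨U ++ ((x + z) :: X), x, hxroot, ?_, ?_, ?_, ?_,
      len_lt_sref hn3 hxroot hx1 _ hpos⟩
    · intro b hb
      simp only [List.mem_append, List.mem_cons] at hb
      rcases hb with h | rfl | h
      · exact hl b (hUsub b h)
      · exact hxzroot
      · exact hl b (hXsub b h)
    · funext i
      rw [sum_append_apply U _ i, sum_cons_apply (x + z) X i, Pi.add_apply]
      have := hpt i
      omega
    · simp only [List.length_append, List.length_cons, List.length_nil]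
      try omega
    · rw [hv2dec0, hvdec0, mul_assoc, hkey0]

lemma master (hn3 : 3 ≤ n) {α : Fin n → ℤ} (hα : IsPosRoot α) (hα1 : ∀ i, α i ≤ 1)
    (hαz : ∃ i, α i = 0) :
    ∀ (N : ℕ) (l : List (Fin n → ℤ)), (∀ b ∈ l, IsPosRoot b) → l.sum ≤ α →
    2 * (∑ i : Fin n, α i - ∑ i : Fin n, l.sum i).toNat + l.length ≤ N →
    ble ((l.map sref).prod) (sref α) := by
  intro N
  induction N using Nat.strong_induction_on with
  | _ N IH =>
  intro l hl hsum hN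
  by_cases heq : l.sum = α
  · rcases l with _ | ⟨b, l'⟩
    · exfalso
      apply root_ne_zero hα
      rw [← heq]
      exact List.sum_nil
    · rcases l' with _ | ⟨c, l''⟩
      · have hb : b = α := by
          rw [← heq]
          show b = b + ([] : List (Fin n → ℤ)).sum
          simp
        rw [List.map_cons, List.map_nil, List.prod_cons, List.prod_nil, mul_one, hb]
        exact Relation.ReflTransGen.refl
      · obtain ⟨l₂, β, hβ, hl₂, hl₂sum, hl₂len, hprodeq, hlt⟩ :=
          surgery hn3 hα hα1 hαz (b :: c :: l'') hl heq (by
            simp only [List.length_cons]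
            omega)
        have hstep : bstep (((b :: c :: l'').map sref).prod)
            ((((b :: c :: l'').map sref).prod) * sref β) := ⟨⟨β, hβ, rfl⟩, hlt⟩
        refine Relation.ReflTransGen.head hstep ?_
        rw [← hprodeq]
        refine IH (2 * (∑ i : Fin n, α i - ∑ i : Fin n, l₂.sum i).toNat + l₂.length) ?_ l₂ hl₂
          (le_of_eq hl₂sum) (le_refl _)
        have hz2 : (∑ i : Fin n, α i - ∑ i : Fin n, l₂.sum i) = 0 := by rw [hl₂sum]; ring
        have hz3 : (∑ i : Fin n, α i - ∑ i : Fin n, (b :: c :: l'').sum i) = 0 := by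
          rw [heq]; ring
        rw [hz2]
        rw [hz3] at hN
        simp only [Int.toNat_zero, Nat.mul_zero, Nat.zero_add] at hN ⊢
        omega
  · have hn0 : 0 < n := by omega
    have hex : ∃ i, l.sum i = 0 ∧ α i = 1 := by
      have hne : ∃ i, l.sum i ≠ α i := by
        by_contra hc
        push_neg at hc
        exact heq (funext hc)
      obtain ⟨i, hi⟩ := hne
      refine ⟨i, ?_, ?_⟩ <;>
      · have h1 : l.sum i ≤ α i := hsum i
        have h2 := hα1 i
        have h3 := list_sum_nonneg (fun b hb => (hl b hb).2) i
        omega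
    obtain ⟨i, hzi, hαi⟩ := hex
    have heroot : IsPosRoot (fun j => if j = i then (1:ℤ) else 0) := by
      constructor
      · show pairing _ _ = 2
        rw [pairing_eq hn3]
        rw [Finset.sum_eq_single i]
        · rw [if_pos rfl, if_neg (fsucc_ne hn3 i), if_neg (fpred_ne hn3 i)]
          ring
        · intro j _ hj
          rw [if_neg hj]
          ring
        · intro h
          exact absurd (Finset.mem_univ i) h
      · intro j
        dsimp only
        split_ifs <;> omega
    have he1 : ∀ j, (fun j => if j = i then (1:ℤ) else 0) j ≤ 1 := fun j => by
      dsimp only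
      split_ifs <;> omega
    have hmem0 : ∀ b ∈ l, b i = 0 := by
      intro b hb
      have h1 := member_le_sum (fun b hb => (hl b hb).2) hb i
      have h2 := (hl b hb).2 i
      omega
    obtain ⟨z', hz'1, hz'2, -⟩ := actv_prod_nonneg hn3 l (fun j => if j = i then (1:ℤ) else 0)
      (fun b hb => ⟨hl b hb, fun j => by
        have h1 := member_le_sum (fun b hb => (hl b hb).2) hb j
        have h2 : l.sum j ≤ α j := hsum j
        have h3 := hα1 j
        omega⟩)
      (pairwise_disjoint_of_sum_le (fun b hb => (hl b hb).2)
        (fun j => le_trans (hsum j) (hα1 j)))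
      (fun b hb j => by
        by_cases hj : j = i
        · right
          rw [hj]
          exact hmem0 b hb
        · left
          rw [if_neg hj])
      (fun j => by split_ifs <;> omega)
    have hpos : ∀ j, 0 ≤ actv ((l.map sref).prod) (fun j => if j = i then (1:ℤ) else 0) j := by
      intro j
      rw [hz'1, Pi.add_apply]
      have h1 := hz'2 j
      have h2 : (0:ℤ) ≤ if j = i then (1:ℤ) else 0 := by split_ifs <;> omega
      omega
    have hlt := len_lt_sref hn3 heroot he1 ((l.map sref).prod) hpos
    have hstep : bstep ((l.map sref).prod)
        ((l.map sref).prod * sref (fun j => if j = i then (1:ℤ) else 0)) :=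
      ⟨⟨_, heroot, rfl⟩, hlt⟩
    refine Relation.ReflTransGen.head hstep ?_
    have hprodeq : ((l ++ [fun j => if j = i then (1:ℤ) else 0]).map sref).prod
        = (l.map sref).prod * sref (fun j => if j = i then (1:ℤ) else 0) := by
      simp [List.map_append, List.prod_append]
    rw [← hprodeq]
    have hsum2 : (l ++ [fun j => if j = i then (1:ℤ) else 0]).sum ≤ α := by
      intro j
      rw [sum_append_apply, sum_singleton_apply]
      dsimp only
      by_cases hj : j = i
      · rw [if_pos hj, hj, hzi, hαi]
        norm_num
      · rw [if_neg hj, add_zero]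
        exact hsum j
    have hroots2 : ∀ b ∈ l ++ [fun j => if j = i then (1:ℤ) else 0], IsPosRoot b := by
      intro b hb
      rcases List.mem_append.mp hb with h | h
      · exact hl b h
      · rw [List.mem_singleton] at h
        rw [h]
        exact heroot
    refine IH (2 * (∑ i' : Fin n, α i' - ∑ i' : Fin n,
      (l ++ [fun j => if j = i then (1:ℤ) else 0]).sum i').toNat
      + (l ++ [fun j => if j = i then (1:ℤ) else 0]).length) ?_ _ hroots2 hsum2 (le_refl _)
    have hS : ∑ i' : Fin n, (l ++ [fun j => if j = i then (1:ℤ) else 0]).sum i'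
        = (∑ i' : Fin n, l.sum i') + 1 := by
      have h1 : ∀ i', (l ++ [fun j => if j = i then (1:ℤ) else 0]).sum i'
          = l.sum i' + (if i' = i then (1:ℤ) else 0) := by
        intro i'
        rw [sum_append_apply, sum_singleton_apply]
      rw [Finset.sum_congr rfl fun i' _ => h1 i', Finset.sum_add_distrib]
      congr 1
      simp
    have hBlt : ∑ i' : Fin n, l.sum i' < ∑ i' : Fin n, α i' := by
      apply Finset.sum_lt_sum (fun i' _ => hsum i')
      exact ⟨i, Finset.mem_univ i, by rw [hzi, hαi]; omega⟩
    rw [hS]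
    simp only [List.length_append, List.length_cons, List.length_nil]
    omega

end Aux6

end Aff
end AffA

open AffA Aff in
/-- for an affine positive real root `α < c`, `Γ_α(id) = {s_α}`. -/
theorem curveNbhd_root (n : ℕ) (hn : 3 ≤ n) (α : Fin n → ℤ) (hα : IsPosRoot α)
    (hαc : α < cvec n) :
    curveNbhd α (1 : Aff n) = {sref α} := by
  have hα1 : ∀ i, α i ≤ 1 := fun i => (le_of_lt hαc) i
  have hαz : ∃ i, α i = 0 := by
    obtain ⟨hle, i, hi⟩ := Pi.lt_def.mp hαc
    refine ⟨i, ?_⟩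
    have h1 := hα.2 i
    have h2 : α i < 1 := hi
    omega
  have hmem : sref α ∈ nbhdSet α 1 := by
    refine ⟨1, Relation.ReflTransGen.refl, [α], ?_, ?_, ?_⟩
    · intro b hb
      rw [List.mem_singleton] at hb
      rw [hb]
      exact hα
    · show [α].sum ≤ α
      intro i
      rw [sum_singleton_apply]
    · rw [one_mul, List.map_cons, List.map_nil, List.prod_cons, List.prod_nil, mul_one]
  have hupper : ∀ v ∈ nbhdSet α 1, ble v (sref α) := by
    rintro v ⟨u', hu', l, hroots, hsum, rfl⟩
    rw [ble_one hu', one_mul]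
    exact master hn hα hα1 hαz _ l hroots hsum (le_refl _)
  ext v
  simp only [Set.mem_singleton_iff]
  constructor
  · rintro ⟨hv, hmax⟩
    exact (hmax (sref α) hmem (hupper v hv)).symm
  · rintro rfl
    exact ⟨hmem, fun x hx hbx => ble_eq_of_le (hupper x hx) (ble_len hbx)⟩
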